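/- arXiv:1403.5665 — 6 statements merged into one kernel-verified Lean document; each statement's English description precedes it below -/
import Mathlib

section
/- There exists an online square-packing strategy σ such that for every finite sequence x₁, …, xₙ of side lengths with xᵢ ∈ (1/4, 1/2] for all i and ∑_{i=1}^{n} xᵢ² ≤ 3/8, the placed squares σ(x₁,…,xᵢ) + [0,xᵢ]² (for i = 1,…,n) are all contained in the unit square [0,1]² and have pairwise disjoint interiors. (The Ceiling Packing subroutine packs any sequence of medium squares with total area at most 3/8 into the unit square.) -/
open Set

/-- The axis-parallel square with lower-left corner `p` and side length `x`. -/
def placedSquare (p : ℝ × ℝ) (x : ℝ) : Set (ℝ × ℝ) :=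
  Icc p.1 (p.1 + x) ×ˢ Icc p.2 (p.2 + x)

/-- Given an online strategy `σ : List ℝ → ℝ × ℝ` and a sequence of side lengths
`x : Fin n → ℝ`, the `i`-th placed square: its lower-left corner is determined by
the prefix `x₁, …, xᵢ`. -/
def place (σ : List ℝ → ℝ × ℝ) {n : ℕ} (x : Fin n → ℝ) (i : Fin n) : Set (ℝ × ℝ) :=
  placedSquare (σ ((List.ofFn x).take (i + 1))) (x i)

open scoped Classical in
/-- One step of the two-shelf algorithm: state is (bottom width, top width). -/
noncomputable def cpStep (p : ℝ × ℝ) (y : ℝ) : ℝ × ℝ :=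
  if p.1 + y ≤ 1 then (p.1 + y, p.2) else (p.1, p.2 + y)

noncomputable def cpState (l : List ℝ) : ℝ × ℝ := l.foldl cpStep (0, 0)

open scoped Classical in
/-- The two-shelf first-fit strategy. -/
noncomputable def cpSigma (l : List ℝ) : ℝ × ℝ :=
  match l.getLast? with
  | none => (0, 0)
  | some y =>
      if (cpState l.dropLast).1 + y ≤ 1 then ((cpState l.dropLast).1, 0)
      else ((cpState l.dropLast).2, 1 / 2)

/-- The Ceiling Packing subroutine: there is an online square-packing strategy that packs
any online sequence of medium squares (side lengths in (1/4, 1/2]) with total area at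
most 3/8 into the unit square. -/
theorem ceiling_packing_medium_squares :
    ∃ σ : List ℝ → ℝ × ℝ,
      ∀ (n : ℕ) (x : Fin n → ℝ),
        (∀ i, 1 / 4 < x i ∧ x i ≤ 1 / 2) →
        (∑ i, (x i) ^ 2) ≤ 3 / 8 →
        (∀ i, place σ x i ⊆ Icc (0 : ℝ) 1 ×ˢ Icc (0 : ℝ) 1) ∧
        (∀ i j, i ≠ j →
          Disjoint (interior (place σ x i)) (interior (place σ x j))) := by
  classical
  refine ⟨cpSigma, ?_⟩
  intro n x hx harea
  set l : List ℝ := List.ofFn x with hl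
  set S : ℕ → ℝ × ℝ := fun m => cpState (l.take m) with hSdef
  set x' : ℕ → ℝ := fun i => if h : i < n then x ⟨i, h⟩ else 0 with hx'def
  set A : ℕ → ℝ := fun m => ∑ i ∈ Finset.range m, x' i ^ 2 with hAdef
  have hx'eq : ∀ i : Fin n, x' (i : ℕ) = x i := by
    intro i; simp [hx'def, i.isLt]
  have htake : ∀ i : Fin n, l.take ((i : ℕ) + 1) = l.take (i : ℕ) ++ [x i] := by
    intro i
    rw [List.take_succ]
    congr 1
    simp [hl, List.getElem?_ofFn, i.isLt]
  have hS : ∀ i : Fin n, S ((i : ℕ) + 1) = cpStep (S i) (x i) := by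
    intro i
    simp only [hSdef, htake i, cpState, List.foldl_append, List.foldl_cons, List.foldl_nil]
  have hσ : ∀ i : Fin n, cpSigma (l.take ((i : ℕ) + 1)) =
      if (S i).1 + x i ≤ 1 then ((S i).1, 0) else ((S i).2, 1 / 2) := by
    intro i
    rw [htake i]
    unfold cpSigma
    rw [List.getLast?_concat, List.dropLast_concat]
  have hS0 : S 0 = (0, 0) := by simp [hSdef, cpState]
  -- stepwise monotonicity
  have hmono1 : ∀ i : Fin n, (S i).1 ≤ (S ((i : ℕ) + 1)).1 ∧ (S i).2 ≤ (S ((i : ℕ) + 1)).2 := by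
    intro i
    have hxi := hx i
    rw [hS i]
    unfold cpStep
    split <;> constructor <;> simp <;> linarith [hxi.1]
  have hmono : ∀ a b : ℕ, a ≤ b → b ≤ n → (S a).1 ≤ (S b).1 ∧ (S a).2 ≤ (S b).2 := by
    intro a b hab hbn
    induction b with
    | zero => interval_cases a; exact ⟨le_rfl, le_rfl⟩
    | succ m ih =>
      rcases Nat.lt_or_ge a (m + 1) with h | h
      · have hmn : m < n := lt_of_lt_of_le (Nat.lt_succ_self m) hbn
        have h1 := ih (Nat.lt_succ_iff.mp h) (le_of_lt hmn)
        have h2 := hmono1 ⟨m, hmn⟩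
        exact ⟨le_trans h1.1 h2.1, le_trans h1.2 h2.2⟩
      · have : a = m + 1 := le_antisymm hab h
        subst this; exact ⟨le_rfl, le_rfl⟩
  have hAsucc : ∀ i : Fin n, A ((i : ℕ) + 1) = A (i : ℕ) + x i ^ 2 := by
    intro i
    simp only [hAdef, Finset.sum_range_succ, hx'eq]
  -- the main invariant
  have inv : ∀ m : ℕ, m ≤ n →
      (0 ≤ (S m).1 ∧ 0 ≤ (S m).2) ∧
      (((S m).2 = 0 ∧ (S m).1 / 4 ≤ A m) ∨
        (∃ s : ℝ, 1 / 4 < s ∧ s ≤ 1 / 2 ∧ 1 < (S m).1 + s ∧ s ≤ (S m).2 ∧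
          (S m).1 / 4 + s ^ 2 + ((S m).2 - s) / 4 ≤ A m)) := by
    intro m
    induction m with
    | zero =>
      intro _
      refine ⟨⟨by simp [hS0], by simp [hS0]⟩, Or.inl ⟨by simp [hS0], by simp [hS0, hAdef]⟩⟩
    | succ m ih =>
      intro hm1
      have hmn : m < n := hm1
      obtain ⟨⟨hb0, ht0⟩, hcase⟩ := ih (le_of_lt hmn)
      set i : Fin n := ⟨m, hmn⟩ with hi
      have hxi := hx i
      have hx2 : x i / 4 ≤ x i ^ 2 := by nlinarith [hxi.1]
      have hstep : S (m + 1) = cpStep (S m) (x i) := hS i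
      have hA : A (m + 1) = A m + x i ^ 2 := hAsucc i
      rw [hstep]
      unfold cpStep
      split
      · rename_i h
        refine ⟨⟨by simp; linarith [hxi.1], by simpa using ht0⟩, ?_⟩
        rcases hcase with ⟨h1, h2⟩ | ⟨s, hs1, hs2, hs3, hs4, hs5⟩
        · exact Or.inl ⟨by simpa using h1, by rw [hA]; first | (dsimp; linarith) | linarith⟩
        · exact Or.inr ⟨s, hs1, hs2, by first | (dsimp; linarith) | linarith, by simpa using hs4,
            by rw [hA]; first | (dsimp; linarith) | linarith⟩
      · rename_i h
        refine ⟨⟨by simpa using hb0, by simp; linarith [hxi.1]⟩, Or.inr ?_⟩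
        rcases hcase with ⟨h1, h2⟩ | ⟨s, hs1, hs2, hs3, hs4, hs5⟩
        · exact ⟨x i, hxi.1, hxi.2, by first | (dsimp; linarith) | linarith, by first | (dsimp; linarith) | linarith,
            by rw [hA]; rw [h1] <;> first | (dsimp; linarith) | linarith⟩
        · exact ⟨s, hs1, hs2, by first | (dsimp; linarith) | linarith, by first | (dsimp; linarith) | linarith,
            by rw [hA]; first | (dsimp; linarith) | linarith⟩
  have hAn : A n ≤ 3 / 8 := by
    have h1 : A n = ∑ i : Fin n, x i ^ 2 := by
      show ∑ i ∈ Finset.range n, x' i ^ 2 = _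
      rw [← Fin.sum_univ_eq_sum_range (fun i => x' i ^ 2) n]
      exact Finset.sum_congr rfl fun i _ => by rw [hx'eq]
    rw [h1]; exact harea
  -- the top shelf stays within [0,1]
  have htn : (S n).2 ≤ 1 := by
    obtain ⟨_, hc⟩ := inv n le_rfl
    rcases hc with ⟨h1, _⟩ | ⟨s, hs1, hs2, hs3, hs4, hs5⟩
    · rw [h1]; norm_num
    · nlinarith [sq_nonneg (s - 1 / 4), (inv n le_rfl).1.1]
  -- description of each placed square
  have hplace : ∀ i : Fin n,
      ((S i).1 + x i ≤ 1 ∧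
        place cpSigma x i = Icc (S i).1 ((S i).1 + x i) ×ˢ Icc (0 : ℝ) (0 + x i) ∧
        S ((i : ℕ) + 1) = ((S i).1 + x i, (S i).2)) ∨
      (1 < (S i).1 + x i ∧
        place cpSigma x i = Icc (S i).2 ((S i).2 + x i) ×ˢ Icc (1 / 2 : ℝ) (1 / 2 + x i) ∧
        S ((i : ℕ) + 1) = ((S i).1, (S i).2 + x i)) := by
    intro i
    have h1 := hσ i
    have h2 := hS i
    by_cases h : (S i).1 + x i ≤ 1
    · left
      refine ⟨h, ?_, ?_⟩
      · rw [place, ← hl, h1, if_pos h, placedSquare]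
      · rw [h2]; unfold cpStep; rw [if_pos h]
    · right
      refine ⟨lt_of_not_ge h, ?_, ?_⟩
      · rw [place, ← hl, h1, if_neg h, placedSquare]
      · rw [h2]; unfold cpStep; rw [if_neg h]
  have hnonneg : ∀ m : ℕ, m ≤ n → 0 ≤ (S m).1 ∧ 0 ≤ (S m).2 := fun m hm => (inv m hm).1
  constructor
  · -- containment
    intro i
    have hin : (i : ℕ) ≤ n := le_of_lt i.isLt
    have hsn : (i : ℕ) + 1 ≤ n := i.isLt
    have hxi := hx i
    rcases hplace i with ⟨h, hpl, hst⟩ | ⟨h, hpl, hst⟩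
    · rw [hpl]
      apply Set.prod_mono <;> apply Icc_subset_Icc
      · exact (hnonneg _ hin).1
      · exact h
      · norm_num
      · linarith [hxi.2]
    · rw [hpl]
      have hle : (S i).2 + x i ≤ (S n).2 := by
        have := (hmono ((i : ℕ) + 1) n hsn le_rfl).2
        rw [hst] at this; exact this
      apply Set.prod_mono <;> apply Icc_subset_Icc
      · exact (hnonneg _ hin).2
      · linarith
      · norm_num
      · linarith [hxi.2]
  · -- disjointness
    have aux : ∀ i j : Fin n, i < j →
        Disjoint (interior (place cpSigma x i)) (interior (place cpSigma x j)) := by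
      intro i j hij
      have hij' : (i : ℕ) + 1 ≤ (j : ℕ) := hij
      have hjn : (j : ℕ) ≤ n := le_of_lt j.isLt
      have hxi := hx i
      have hxj := hx j
      rcases hplace i with ⟨h, hpl, hst⟩ | ⟨h, hpl, hst⟩ <;>
        rcases hplace j with ⟨h', hpl', hst'⟩ | ⟨h', hpl', hst'⟩ <;>
          rw [hpl, hpl'] <;>
          simp only [interior_prod_eq, interior_Icc] <;>
          rw [Set.disjoint_left] <;>
          rintro ⟨a, c⟩ ⟨ha, hc⟩ ⟨ha', hc'⟩ <;>
          simp only [mem_Ioo] at ha hc ha' hc'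
      · -- both bottom: x-coordinates separate
        have hsep : (S i).1 + x i ≤ (S j).1 := by
          have := (hmono ((i : ℕ) + 1) (j : ℕ) hij' hjn).1
          rw [hst] at this; exact this
        linarith [ha.1, ha.2, ha'.1]
      · -- bottom vs top: y-coordinates separate
        linarith [hc.2, hc'.1, hxi.2]
      · -- top vs bottom
        linarith [hc.1, hc'.2, hxj.2]
      · -- both top
        have hsep : (S i).2 + x i ≤ (S j).2 := by
          have := (hmono ((i : ℕ) + 1) (j : ℕ) hij' hjn).2
          rw [hst] at this; exact this
        linarith [ha.1, ha.2, ha'.1]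
    intro i j hij
    rcases lt_or_gt_of_ne hij with h | h
    · exact aux i j h
    · exact (aux j i h).symm
end

section
/- Let h > 0 and w > 0, let x₁, …, xₙ be real numbers with h/2 < xᵢ ≤ h for all i (the side lengths of squares packed into a shelf of width w and height h), and let x be a real number with h/2 < x ≤ h such that x₁ + ⋯ + xₙ + x > w (the next square does not fit into the shelf). Then x₁² + ⋯ + xₙ² + x² > w·h/2 − (h/2)² + (1/2)·h·x. (Shelf-end density lemma: the total area of the squares packed into the shelf plus the area of the overflowing square exceeds half the shelf area minus (h/2)² plus hx/2.) -/
/-- Shelf-end density lemma (Moon–Moser): if squares of side lengths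
`x₁, …, xₙ ∈ (h/2, h]` are packed into a shelf of width `w` and height `h`, and a
further square of side `x ∈ (h/2, h]` does not fit (i.e. `x₁ + ⋯ + xₙ + x > w`),
then the total area of the packed squares plus the area of the overflowing square
exceeds `w·h/2 − (h/2)² + h·x/2`. -/
theorem shelf_end_density (h w : ℝ) (hh : 0 < h) (hw : 0 < w)
    (n : ℕ) (xs : Fin n → ℝ) (hxs : ∀ i, h / 2 < xs i ∧ xs i ≤ h)
    (x : ℝ) (hx₁ : h / 2 < x) (hx₂ : x ≤ h)
    (hover : (∑ i, xs i) + x > w) :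
    (∑ i, (xs i) ^ 2) + x ^ 2 > w * h / 2 - (h / 2) ^ 2 + (1 / 2) * h * x := by
  have key : (h / 2) * (∑ i, xs i) ≤ ∑ i, (xs i) ^ 2 := by
    rw [Finset.mul_sum]
    apply Finset.sum_le_sum
    intro i _
    have := (hxs i).1
    nlinarith
  nlinarith [sq_nonneg (x - h / 2)]
end

section
/- Let h > 0 and w > 0, let x₁, …, xₙ be real numbers with h/2 < xᵢ ≤ h for all i, and let x be a real number with h/2 < x ≤ h such that x₁ + ⋯ + xₙ + x > w. Then x₁² + ⋯ + xₙ² + x² > (w − h/2)·h/2. (A closed shelf, with the extra area of its overflowing square assigned to it, has density at least 1/2 on the shelf minus its final slice of width h/2.) -/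
/-- A closed shelf, with the extra area of the overflowing square assigned to it, has
density at least 1/2 on the shelf minus its final slice of width `h/2`: if squares of
side lengths `x₁, …, xₙ ∈ (h/2, h]` are packed into a shelf of width `w` and height
`h`, and a further square of side `x ∈ (h/2, h]` does not fit, then
`x₁² + ⋯ + xₙ² + x² > (w − h/2)·h/2`. -/
theorem closed_shelf_density (h w : ℝ) (hh : 0 < h) (hw : 0 < w)
    (n : ℕ) (xs : Fin n → ℝ) (hxs : ∀ i, h / 2 < xs i ∧ xs i ≤ h)
    (x : ℝ) (hx₁ : h / 2 < x) (hx₂ : x ≤ h)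
    (hover : (∑ i, xs i) + x > w) :
    (∑ i, (xs i) ^ 2) + x ^ 2 > (w - h / 2) * h / 2 := by
  have hsum : h / 2 * ∑ i, xs i ≤ ∑ i, (xs i) ^ 2 := by
    rw [Finset.mul_sum]
    refine Finset.sum_le_sum fun i _ => ?_
    have h1 := (hxs i).1
    nlinarith [h1]
  nlinarith [hsum, sq_nonneg (x - h/2)]
end

section
/- Let w > 0 and h ≥ 2w (a vertical buffer subshelf of width w and height h, where the height-to-width ratio is at least 2), let x₁, …, xₙ be real numbers with w/2 < xᵢ ≤ w for all i, and let x be a real number with w/2 < x ≤ w such that x₁ + ⋯ + xₙ + x > h (the next square does not fit). Then x₁² + ⋯ + xₙ² + x² > (w/2)² + (w/2)·(h/2). (The total area packed into a closed vertical buffer subshelf, counting the overflowing square, is at least (w/2)² plus the area of a slice of width w/2 and height h at density 1/2.) -/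
/-- Closed vertical buffer subshelf density: for a vertical shelf of width `w` and
height `h ≥ 2w`, packed with squares of side lengths `x₁, …, xₙ ∈ (w/2, w]` stacked
along its height, if a further square of side `x ∈ (w/2, w]` does not fit
(i.e. `x₁ + ⋯ + xₙ + x > h`), then the total packed area, counting the overflowing
square, exceeds `(w/2)² + (w/2)·(h/2)`. -/
theorem closed_vertical_buffer_subshelf_density (w h : ℝ) (hw : 0 < w) (hh : 2 * w ≤ h)
    (n : ℕ) (xs : Fin n → ℝ) (hxs : ∀ i, w / 2 < xs i ∧ xs i ≤ w)
    (x : ℝ) (hx₁ : w / 2 < x) (hx₂ : x ≤ w)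
    (hover : (∑ i, xs i) + x > h) :
    (∑ i, (xs i) ^ 2) + x ^ 2 > (w / 2) ^ 2 + (w / 2) * (h / 2) := by
  have hw2 : 0 < w / 2 := by linarith
  have hsq : ∀ i, (w / 2) * xs i ≤ (xs i) ^ 2 := by
    intro i
    obtain ⟨h1, h2⟩ := hxs i
    nlinarith
  have hsum : (w / 2) * (∑ i, xs i) ≤ ∑ i, (xs i) ^ 2 := by
    rw [Finset.mul_sum]
    exact Finset.sum_le_sum fun i _ => hsq i
  nlinarith [hover, hsum]
end

section
/- There exists a valid online placement strategy σ such that for every finite sequence x₁, …, xₙ of positive side lengths and every m with 1 ≤ m ≤ n, one has ∑_{i=1}^{m} xᵢ² ≥ (1/8) · Eₘ², where Eₘ is the minimum side length of an axis-parallel square containing the first m placed squares σ(x₁,…,xᵢ) + [0,xᵢ]², i = 1,…,m. (The Dynamic Brick Algorithm maintains a packing density of at least 1/8 for any input sequence of squares in a dynamic square container.) -/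
open Set

/-- An online placement strategy is valid if, for every finite sequence of positive
side lengths, the placed squares have pairwise disjoint interiors. -/
def ValidStrategy (σ : List ℝ → ℝ × ℝ) : Prop :=
  ∀ (n : ℕ) (x : Fin n → ℝ), (∀ i, 0 < x i) →
    ∀ i j, i ≠ j → Disjoint (interior (place σ x i)) (interior (place σ x j))

/-- The minimum side length of an axis-parallel square containing the set `S`. -/
noncomputable def minSide (S : Set (ℝ × ℝ)) : ℝ :=
  sInf {s : ℝ | ∃ a b : ℝ, S ⊆ Icc a (a + s) ×ˢ Icc b (b + s)}

namespace DBA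

noncomputable def rt2 : ℝ := Real.sqrt 2

lemma rt2_pos : 0 < rt2 := Real.sqrt_pos.mpr (by norm_num)
lemma rt2_sq : rt2 ^ (2:ℕ) = 2 := Real.sq_sqrt (by norm_num)

/-- `(√2)^j` for `j : ℤ`. -/
noncomputable def s (j : ℤ) : ℝ := rt2 ^ j

lemma s_pos (j : ℤ) : 0 < s j := zpow_pos rt2_pos j

lemma s_mono {j j' : ℤ} (h : j ≤ j') : s j ≤ s j' := by
  apply zpow_le_zpow_right₀ _ h
  nlinarith [rt2_sq, rt2_pos]

lemma s_two_mul (j : ℤ) : s (j-1) + s (j-1) = s (j+1) := by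
  have h : s (j+1) = s (j-1) * rt2 ^ (2:ℕ) := by
    rw [s, s, ← zpow_natCast rt2 2, ← zpow_add₀ (ne_of_gt rt2_pos)]
    congr 1; omega
  rw [h, rt2_sq]; ring

lemma s_sq (j : ℤ) : s j ^ (2:ℕ) = (2:ℝ) ^ j := by
  have h : s j ^ (2:ℕ) = rt2 ^ (j + j) := by
    rw [s, pow_two, ← zpow_add₀ (ne_of_gt rt2_pos)]
  have h2 : rt2 ^ (j + j) = (rt2 ^ (2:ℤ)) ^ j := by
    rw [← zpow_mul]; congr 1; ring
  have h3 : rt2 ^ (2:ℤ) = 2 := by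
    rw [show (2:ℤ) = ((2:ℕ):ℤ) by norm_num, zpow_natCast, rt2_sq]
  rw [h, h2, h3]

/-- width of a class-`j` brick -/
noncomputable def W (j : ℤ) : ℝ := if Even j then s (j+1) else s j
/-- height of a class-`j` brick -/
noncomputable def H (j : ℤ) : ℝ := if Even j then s j else s (j+1)

lemma even_sub_one_iff (j : ℤ) : Even (j-1) ↔ ¬ Even j := by simp [Int.even_sub]

lemma W_pos (j : ℤ) : 0 < W j := by unfold W; split <;> exact s_pos _
lemma H_pos (j : ℤ) : 0 < H j := by unfold H; split <;> exact s_pos _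

lemma s_le_W (j : ℤ) : s j ≤ W j := by
  unfold W; split
  · exact s_mono (by omega)
  · exact le_refl _

lemma s_le_H (j : ℤ) : s j ≤ H j := by
  unfold H; split
  · exact le_refl _
  · exact s_mono (by omega)

lemma W_le (j : ℤ) : W j ≤ s (j+1) := by
  unfold W; split
  · exact le_refl _
  · exact s_mono (by omega)

lemma H_le (j : ℤ) : H j ≤ s (j+1) := by
  unfold H; split
  · exact s_mono (by omega)
  · exact le_refl _

lemma W_child (j : ℤ) : W (j-1) ≤ W j := by
  unfold W
  rcases Int.even_or_odd j with he | ho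
  · rw [if_pos he, if_neg ((even_sub_one_iff j).not.mpr (not_not_intro he))]
    exact s_mono (by omega)
  · have hne : ¬ Even j := Int.not_even_iff_odd.mpr ho
    rw [if_neg hne, if_pos ((even_sub_one_iff j).mpr hne), show j - 1 + 1 = j by ring]

lemma H_child (j : ℤ) : H (j-1) ≤ H j := by
  unfold H
  rcases Int.even_or_odd j with he | ho
  · rw [if_pos he, if_neg ((even_sub_one_iff j).not.mpr (not_not_intro he)),
      show j - 1 + 1 = j by ring]
  · have hne : ¬ Even j := Int.not_even_iff_odd.mpr ho
    rw [if_neg hne, if_pos ((even_sub_one_iff j).mpr hne)]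
    exact s_mono (by omega)

abbrev Brk : Type := ℤ × ℝ × ℝ

noncomputable def bSet (b : Brk) : Set (ℝ × ℝ) :=
  Icc b.2.1 (b.2.1 + W b.1) ×ˢ Icc b.2.2 (b.2.2 + H b.1)

noncomputable def oSet (b : Brk) : Set (ℝ × ℝ) :=
  Ioo b.2.1 (b.2.1 + W b.1) ×ˢ Ioo b.2.2 (b.2.2 + H b.1)

lemma oSet_eq_interior (b : Brk) : interior (bSet b) = oSet b := by
  rw [bSet, oSet, interior_prod_eq, interior_Icc, interior_Icc]

def Dj (a b : Brk) : Prop := Disjoint (oSet a) (oSet b)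

lemma Dj_symm : ∀ {a b : Brk}, Dj a b → Dj b a := fun h => Disjoint.symm h

lemma Dj_mono {a a' b b' : Brk} (ha : bSet a ⊆ bSet a') (hb : bSet b ⊆ bSet b')
    (h : Dj a' b') : Dj a b := by
  have ha' : oSet a ⊆ oSet a' := by
    rw [← oSet_eq_interior, ← oSet_eq_interior]; exact interior_mono ha
  have hb' : oSet b ⊆ oSet b' := by
    rw [← oSet_eq_interior, ← oSet_eq_interior]; exact interior_mono hb
  exact h.mono ha' hb'

/-- offset of the second child of a class-`j` brick -/
noncomputable def off (j : ℤ) : ℝ × ℝ := if Even j then (s (j-1), 0) else (0, s (j-1))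

lemma child1_sub (j : ℤ) (p : ℝ × ℝ) : bSet (j-1, p) ⊆ bSet (j, p) := by
  unfold bSet
  exact Set.prod_mono (Set.Icc_subset_Icc_right (add_le_add_right (W_child j) _))
    (Set.Icc_subset_Icc_right (add_le_add_right (H_child j) _))

lemma child2_sub (j : ℤ) (p : ℝ × ℝ) : bSet (j-1, p + off j) ⊆ bSet (j, p) := by
  have h2 := s_two_mul j
  have hs := s_pos (j-1)
  unfold bSet off
  rcases Int.even_or_odd j with he | ho
  · have ho1 : ¬ Even (j-1) := (even_sub_one_iff j).not.mpr (not_not_intro he)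
    rw [if_pos he]
    have hW : W (j-1) = s (j-1) := by unfold W; rw [if_neg ho1]
    have hH : H (j-1) = s j := by
      unfold H; rw [if_neg ho1, show j - 1 + 1 = j by ring]
    have hWj : W j = s (j+1) := by unfold W; rw [if_pos he]
    have hHj : H j = s j := by unfold H; rw [if_pos he]
    rw [hW, hH, hWj, hHj]
    apply Set.prod_mono
    · exact (Set.Icc_subset_Icc (by change p.1 ≤ p.1 + s (j-1); linarith)
        (by change p.1 + s (j-1) + s (j-1) ≤ p.1 + s (j+1); linarith) :
        Icc ((p + (s (j-1), (0:ℝ))).1) ((p + (s (j-1), (0:ℝ))).1 + s (j-1)) ⊆ _)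
    · exact (Set.Icc_subset_Icc (by change p.2 ≤ p.2 + 0; linarith)
        (by change p.2 + 0 + s j ≤ p.2 + s j; linarith) :
        Icc ((p + (s (j-1), (0:ℝ))).2) ((p + (s (j-1), (0:ℝ))).2 + s j) ⊆ _)
  · have hne : ¬ Even j := Int.not_even_iff_odd.mpr ho
    have he1 : Even (j-1) := (even_sub_one_iff j).mpr hne
    rw [if_neg hne]
    have hW : W (j-1) = s j := by
      unfold W; rw [if_pos he1, show j - 1 + 1 = j by ring]
    have hH : H (j-1) = s (j-1) := by unfold H; rw [if_pos he1]
    have hWj : W j = s j := by unfold W; rw [if_neg hne]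
    have hHj : H j = s (j+1) := by unfold H; rw [if_neg hne]
    rw [hW, hH, hWj, hHj]
    apply Set.prod_mono
    · exact (Set.Icc_subset_Icc (by change p.1 ≤ p.1 + 0; linarith)
        (by change p.1 + 0 + s j ≤ p.1 + s j; linarith) :
        Icc ((p + ((0:ℝ), s (j-1))).1) ((p + ((0:ℝ), s (j-1))).1 + s j) ⊆ _)
    · exact (Set.Icc_subset_Icc (by change p.2 ≤ p.2 + s (j-1); linarith)
        (by change p.2 + s (j-1) + s (j-1) ≤ p.2 + s (j+1); linarith) :
        Icc ((p + ((0:ℝ), s (j-1))).2) ((p + ((0:ℝ), s (j-1))).2 + s (j-1)) ⊆ _)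

lemma child_dj (j : ℤ) (p : ℝ × ℝ) : Dj (j-1, p) (j-1, p + off j) := by
  have hs := s_pos (j-1)
  unfold Dj oSet off
  rcases Int.even_or_odd j with he | ho
  · have ho1 : ¬ Even (j-1) := (even_sub_one_iff j).not.mpr (not_not_intro he)
    have hW : W (j-1) = s (j-1) := by unfold W; rw [if_neg ho1]
    rw [if_pos he, Set.disjoint_left]
    rintro ⟨u, v⟩ ⟨h1, _⟩ ⟨h3, _⟩
    have ha : u < p.1 + W (j-1) := h1.2
    have hb : p.1 + s (j-1) < u := h3.1
    rw [hW] at ha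
    linarith
  · have hne : ¬ Even j := Int.not_even_iff_odd.mpr ho
    have he1 : Even (j-1) := (even_sub_one_iff j).mpr hne
    have hH : H (j-1) = s (j-1) := by unfold H; rw [if_pos he1]
    rw [if_neg hne, Set.disjoint_left]
    rintro ⟨u, v⟩ ⟨_, h2⟩ ⟨_, h4⟩
    have ha : v < p.2 + H (j-1) := h2.2
    have hb : p.2 + s (j-1) < v := h4.1
    rw [hH] at ha
    linarith


/-- size class of a square of side `x` -/
noncomputable def cls (x : ℝ) : ℤ := ⌈Real.logb 2 (x ^ 2)⌉

lemma sq_le_cls {x : ℝ} (hx : 0 < x) : x ^ 2 ≤ (2:ℝ) ^ cls x := by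
  have hx2 : 0 < x ^ 2 := by positivity
  have h1 : x ^ 2 = (2:ℝ) ^ (Real.logb 2 (x ^ 2)) := (Real.rpow_logb (by norm_num) (by norm_num) hx2).symm
  have h2 : (2:ℝ) ^ (Real.logb 2 (x ^ 2)) ≤ (2:ℝ) ^ ((cls x : ℤ) : ℝ) :=
    Real.rpow_le_rpow_of_exponent_le (by norm_num) (Int.le_ceil _)
  calc x ^ 2 = (2:ℝ) ^ (Real.logb 2 (x ^ 2)) := h1
    _ ≤ (2:ℝ) ^ ((cls x : ℤ) : ℝ) := h2
    _ = (2:ℝ) ^ (cls x) := Real.rpow_intCast 2 (cls x)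

lemma cls_le_sq {x : ℝ} (hx : 0 < x) : (2:ℝ) ^ cls x ≤ 2 * x ^ 2 := by
  have hx2 : 0 < x ^ 2 := by positivity
  have h0 : ((cls x : ℤ) : ℝ) ≤ Real.logb 2 (x ^ 2) + 1 := le_of_lt (Int.ceil_lt_add_one _)
  have h2 : (2:ℝ) ^ ((cls x : ℤ) : ℝ) ≤ (2:ℝ) ^ (Real.logb 2 (x ^ 2) + 1) :=
    Real.rpow_le_rpow_of_exponent_le (by norm_num) h0
  have h3 : (2:ℝ) ^ (Real.logb 2 (x ^ 2) + 1) = x ^ 2 * 2 := by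
    rw [Real.rpow_add (by norm_num), Real.rpow_logb (by norm_num) (by norm_num) hx2,
      Real.rpow_one]
  calc (2:ℝ) ^ cls x = (2:ℝ) ^ ((cls x : ℤ) : ℝ) := (Real.rpow_intCast 2 (cls x)).symm
    _ ≤ (2:ℝ) ^ (Real.logb 2 (x ^ 2) + 1) := h2
    _ = 2 * x ^ 2 := by rw [h3]; ring

lemma le_s_cls {x : ℝ} (hx : 0 < x) : x ≤ s (cls x) := by
  have h1 : x ^ 2 ≤ s (cls x) ^ 2 := by rw [s_sq]; exact sq_le_cls hx
  have h2 : x = Real.sqrt (x ^ 2) := (Real.sqrt_sq hx.le).symm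
  have h3 : s (cls x) = Real.sqrt (s (cls x) ^ 2) := (Real.sqrt_sq (s_pos _).le).symm
  nlinarith [s_pos (cls x), h1, hx]

structure St where
  T : ℤ
  free : List Brk
  placed : List Brk

noncomputable def splitFrees : ℕ → ℤ → ℝ × ℝ → List Brk
  | 0, _, _ => []
  | n+1, j, p => splitFrees n (j-1) p ++ [(j - 1, p + off j)]

def pick (k : ℤ) : List Brk → Option (List Brk × Brk × List Brk)
  | [] => none
  | b :: r => if k ≤ b.1 then some ([], b, r)
      else (pick k r).map fun y => (b :: y.1, y.2.1, y.2.2)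

noncomputable def grow1 (st : St) : St :=
  ⟨st.T + 1, st.free ++ [(st.T, (0,0) + off (st.T + 1))], st.placed⟩

noncomputable def growN : ℕ → St → St
  | 0, st => st
  | n+1, st => growN n (grow1 st)

noncomputable def totalF (l : List Brk) : ℝ := (l.map fun b => (2:ℝ) ^ b.1).sum

lemma totalF_nil : totalF [] = 0 := rfl
lemma totalF_cons (b : Brk) (l : List Brk) : totalF (b :: l) = 2 ^ b.1 + totalF l := rfl
lemma totalF_append (l₁ l₂ : List Brk) : totalF (l₁ ++ l₂) = totalF l₁ + totalF l₂ := by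
  unfold totalF; rw [List.map_append, List.sum_append]

lemma totalF_nonneg (l : List Brk) : 0 ≤ totalF l := by
  unfold totalF
  apply List.sum_nonneg
  intro a ha
  simp only [List.mem_map] at ha
  obtain ⟨b, _, rfl⟩ := ha
  positivity

/-- sum of distinct powers of two below `k` is at most `2^k - 2^m` -/
lemma totalF_le_aux (l : List Brk) (k m : ℤ) (hmk : m ≤ k)
    (hs : l.Pairwise fun a b => a.1 < b.1) (hk : ∀ b ∈ l, m ≤ b.1 ∧ b.1 < k) :
    totalF l ≤ (2:ℝ) ^ k - (2:ℝ) ^ m := by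
  induction l generalizing m with
  | nil =>
    rw [totalF_nil]
    have := zpow_le_zpow_right₀ (by norm_num : (1:ℝ) ≤ 2) hmk
    linarith
  | cons a r ih =>
    rw [totalF_cons]
    have ha := hk a List.mem_cons_self
    have hr : totalF r ≤ (2:ℝ) ^ k - (2:ℝ) ^ (a.1 + 1) := by
      apply ih (a.1 + 1) (by omega) (List.Pairwise.sublist (List.sublist_cons_self a r) hs)
      intro b hb
      refine ⟨?_, (hk b (List.mem_cons_of_mem a hb)).2⟩
      have := (List.pairwise_cons.mp hs).1 b hb
      omega
    have h1 : (2:ℝ) ^ (a.1 + 1) = 2 ^ a.1 + 2 ^ a.1 := by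
      rw [zpow_add_one₀ (by norm_num : (2:ℝ) ≠ 0)]; ring
    have h2 : (2:ℝ) ^ m ≤ 2 ^ a.1 := zpow_le_zpow_right₀ (by norm_num) ha.1
    linarith

lemma totalF_le (l : List Brk) (k : ℤ)
    (hs : l.Pairwise fun a b => a.1 < b.1) (hk : ∀ b ∈ l, b.1 < k) :
    totalF l ≤ (2:ℝ) ^ k := by
  cases l with
  | nil => rw [totalF_nil]; positivity
  | cons a r =>
    have ha : a.1 < k := hk a List.mem_cons_self
    have := totalF_le_aux (a :: r) k a.1 (le_of_lt ha) hs ?_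
    · have hp : (0:ℝ) < 2 ^ a.1 := by positivity
      linarith
    · intro b hb
      rcases List.mem_cons.mp hb with rfl | hb'
      · exact ⟨le_refl _, ha⟩
      · exact ⟨le_of_lt ((List.pairwise_cons.mp hs).1 b hb'), hk b (List.mem_cons_of_mem a hb')⟩

lemma pick_eq_some {k : ℤ} : ∀ {l lo hi : List Brk} {c : Brk},
    pick k l = some (lo, c, hi) →
    l = lo ++ c :: hi ∧ (∀ b ∈ lo, b.1 < k) ∧ k ≤ c.1 := by
  intro l
  induction l with
  | nil => intro lo hi c h; simp [pick] at h
  | cons a r ih =>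
    intro lo hi c h
    rw [pick] at h
    split at h
    · rename_i hka
      rw [Option.some_inj, Prod.mk.injEq, Prod.mk.injEq] at h
      obtain ⟨rfl, rfl, rfl⟩ := h
      exact ⟨rfl, by simp, hka⟩
    · rename_i hka
      cases hp : pick k r with
      | none => rw [hp] at h; simp at h
      | some y =>
        obtain ⟨lo', c', hi'⟩ := y
        rw [hp] at h
        simp only [Option.map_some, Option.some_inj, Prod.mk.injEq] at h
        obtain ⟨rfl, rfl, rfl⟩ := h
        obtain ⟨e1, e2, e3⟩ := ih hp
        refine ⟨by rw [List.cons_append, ← e1], ?_, e3⟩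
        intro b hb
        rcases List.mem_cons.mp hb with rfl | hb'
        · omega
        · exact e2 b hb'

lemma pick_eq_none {k : ℤ} : ∀ {l : List Brk}, pick k l = none → ∀ b ∈ l, b.1 < k := by
  intro l
  induction l with
  | nil => intro _ b hb; simp at hb
  | cons a r ih =>
    intro h b hb
    rw [pick] at h
    split at h
    · simp at h
    · rename_i hka
      rcases List.mem_cons.mp hb with rfl | hb'
      · omega
      · cases hp : pick k r with
        | none => exact ih hp b hb'
        | some y => rw [hp] at h; simp at h

lemma pick_isSome {k : ℤ} : ∀ {l : List Brk}, (∃ b ∈ l, k ≤ b.1) → (pick k l).isSome := by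
  intro l
  induction l with
  | nil => rintro ⟨b, hb, _⟩; simp at hb
  | cons a r ih =>
    rintro ⟨b, hb, hkb⟩
    rw [pick]
    split
    · simp
    · rename_i hka
      rcases List.mem_cons.mp hb with rfl | hb'
      · omega
      · have := ih ⟨b, hb', hkb⟩
        cases hp : pick k r with
        | none => rw [hp] at this; simp at this
        | some y => simp

lemma cast_succ_sub (j : ℤ) (n : ℕ) : j - ((n:ℤ) + 1) = (j - 1) - n := by omega

lemma split_spec : ∀ (n : ℕ) (j : ℤ) (p : ℝ × ℝ),
    (∀ b ∈ splitFrees n j p, bSet b ⊆ bSet (j, p) ∧ (j - n ≤ b.1 ∧ b.1 < j) ∧ Dj (j - n, p) b) ∧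
    (splitFrees n j p).Pairwise Dj ∧
    (splitFrees n j p).Pairwise (fun a b => a.1 < b.1) ∧
    bSet (j - n, p) ⊆ bSet (j, p) ∧
    totalF (splitFrees n j p) = 2 ^ j - 2 ^ (j - n) := by
  intro n
  induction n with
  | zero =>
    intro j p
    refine ⟨by simp [splitFrees], by simp [splitFrees], by simp [splitFrees], ?_, by simp [splitFrees, totalF_nil]⟩
    simp
  | succ n ih =>
    intro j p
    obtain ⟨ihmem, ihdj, ihsort, ihsub, ihtot⟩ := ih (j-1) p
    have hcast : j - ((n:ℤ) + 1) = (j - 1) - n := by omega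
    have hcast2 : ((n+1 : ℕ) : ℤ) = (n:ℤ) + 1 := by push_cast; ring
    have hsplit : splitFrees (n+1) j p = splitFrees n (j-1) p ++ [(j - 1, p + off j)] := rfl
    have hc1 : bSet ((j:ℤ)-1, p) ⊆ bSet (j, p) := child1_sub j p
    have hc2 : bSet ((j:ℤ)-1, p + off j) ⊆ bSet (j, p) := child2_sub j p
    have hdj12 : Dj ((j:ℤ)-1, p) ((j:ℤ)-1, p + off j) := child_dj j p
    have hplsub : bSet (j - ((n:ℕ)+1 : ℤ), p) ⊆ bSet (j, p) := by
      rw [show (j - ((n:ℕ)+1 : ℤ)) = (j-1) - n by omega]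
      exact ihsub.trans hc1
    refine ⟨?_, ?_, ?_, ?_, ?_⟩
    · intro b hb
      rw [hsplit, List.mem_append] at hb
      rcases hb with hb | hb
      · obtain ⟨hsub, hcls, hdj⟩ := ihmem b hb
        refine ⟨hsub.trans hc1, by rw [hcast2]; omega, ?_⟩
        rw [hcast2, hcast]
        exact hdj
      · rw [List.mem_singleton] at hb
        subst hb
        refine ⟨hc2, by rw [hcast2]; omega, ?_⟩
        rw [hcast2, hcast]
        exact Dj_mono (ihsub) (le_refl _) hdj12
    · rw [hsplit, List.pairwise_append]
      refine ⟨ihdj, List.pairwise_singleton _ _, ?_⟩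
      intro a ha b hb
      rw [List.mem_singleton] at hb
      subst hb
      exact Dj_mono (ihmem a ha).1 (le_refl _) hdj12
    · rw [hsplit, List.pairwise_append]
      refine ⟨ihsort, List.pairwise_singleton _ _, ?_⟩
      intro a ha b hb
      rw [List.mem_singleton] at hb
      subst hb
      exact (ihmem a ha).2.1.2
    · exact hplsub
    · rw [hsplit, totalF_append, ihtot, totalF_cons, totalF_nil]
      have h1 : (2:ℝ) ^ j = 2 ^ (j-1) + 2 ^ (j-1) := by
        rw [show j = (j-1) + 1 by ring, zpow_add_one₀ (by norm_num : (2:ℝ) ≠ 0)]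
        ring_nf
      rw [hcast2, show j - ((n:ℤ)+1) = (j-1) - n by omega]
      linarith

structure GInv (st : St) : Prop where
  sorted : st.free.Pairwise fun a b => a.1 < b.1
  freeLt : ∀ b ∈ st.free, b.1 < st.T
  sub : ∀ b ∈ st.free ++ st.placed, bSet b ⊆ bSet (st.T, ((0:ℝ), (0:ℝ)))
  dj : (st.free ++ st.placed).Pairwise Dj
  total : (2:ℝ) ^ st.T ≤ totalF st.free + totalF st.placed
  ne : st.placed ≠ []

lemma Dj_symmetric : Symmetric Dj := fun _ _ h => Dj_symm h

lemma place_inv (st : St) (k : ℤ) (lo hi : List Brk) (c : Brk)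
    (hpick : pick k st.free = some (lo, c, hi)) (h : GInv st) :
    GInv ⟨st.T, lo ++ splitFrees (c.1 - k).toNat c.1 c.2 ++ hi, (k, c.2) :: st.placed⟩ := by
  obtain ⟨hfe, hlo, hkc⟩ := pick_eq_some hpick
  set n : ℕ := (c.1 - k).toNat with hn
  have hnz : (n:ℤ) = c.1 - k := Int.toNat_of_nonneg (by omega)
  have hkeq : c.1 - (n:ℤ) = k := by omega
  set X : List Brk := splitFrees n c.1 c.2 with hX
  have hceta : ((c.1, c.2) : Brk) = c := rfl
  obtain ⟨smem0, sdj, ssort, ssub0, stot0⟩ := split_spec n c.1 c.2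
  rw [hkeq] at smem0 ssub0 stot0
  rw [hceta] at smem0 ssub0
  have smem : ∀ b ∈ X, bSet b ⊆ bSet c ∧ (k ≤ b.1 ∧ b.1 < c.1) ∧ Dj (k, c.2) b := smem0
  have ssub : bSet ((k, c.2) : Brk) ⊆ bSet c := ssub0
  have stot : totalF X = 2 ^ c.1 - 2 ^ k := stot0
  -- decompose old sortedness
  have hsort := h.sorted
  rw [hfe, List.pairwise_append] at hsort
  obtain ⟨hlosort, hchisort, hcross2⟩ := hsort
  rw [List.pairwise_cons] at hchisort
  obtain ⟨hc_hi, hhisort⟩ := hchisort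
  -- decompose old disjointness
  have hdj := h.dj
  rw [hfe] at hdj
  rw [List.pairwise_append] at hdj
  obtain ⟨h1, hpldj, hcross1⟩ := hdj
  rw [List.pairwise_append] at h1
  obtain ⟨hlodj, hchidj, hcrossA⟩ := h1
  rw [List.pairwise_cons] at hchidj
  obtain ⟨hchid, hhidj⟩ := hchidj
  have hcmem : c ∈ st.free := by rw [hfe]; exact List.mem_append_right _ List.mem_cons_self
  have hcsub : bSet c ⊆ bSet (st.T, ((0:ℝ), (0:ℝ))) :=
    h.sub c (List.mem_append_left _ hcmem)
  -- Rest and its properties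
  set Rest : List Brk := lo ++ (hi ++ st.placed) with hRest
  have hDjc_rest : ∀ b ∈ Rest, Dj c b := by
    intro b hb
    rw [hRest, List.mem_append, List.mem_append] at hb
    rcases hb with hb | hb | hb
    · exact Dj_symm (hcrossA b hb c List.mem_cons_self)
    · exact hchid b hb
    · exact hcross1 c (List.mem_append_right _ List.mem_cons_self) b hb
  have hrest_pair : Rest.Pairwise Dj := by
    have hsl : Rest.Sublist (st.free ++ st.placed) := by
      rw [hfe, hRest, ← List.append_assoc]
      exact ((hi.sublist_cons_self c).append_left lo).append_right st.placed
    exact h.dj.sublist hsl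
  have hmem_rest : ∀ b ∈ Rest, b ∈ st.free ++ st.placed := by
    intro b hb
    rw [hRest, List.mem_append, List.mem_append] at hb
    rw [hfe]
    rcases hb with hb | hb | hb
    · exact List.mem_append_left _ (List.mem_append_left _ hb)
    · exact List.mem_append_left _ (List.mem_append_right _ (List.mem_cons_of_mem c hb))
    · exact List.mem_append_right _ hb
  -- the new full list and its permutation
  have hperm : ((lo ++ X ++ hi) ++ ((k, c.2) :: st.placed)).Perm
      ((k, c.2) :: (X ++ Rest)) := by
    have t1 : ((lo ++ X ++ hi) ++ ((k, c.2) :: st.placed)).Perm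
        ((k, c.2) :: ((lo ++ X ++ hi) ++ st.placed)) := List.perm_middle
    have t2 : ((lo ++ X ++ hi) ++ st.placed).Perm (X ++ Rest) := by
      have e1 : (lo ++ X ++ hi) ++ st.placed = (lo ++ X) ++ (hi ++ st.placed) := by
        simp [List.append_assoc]
      have e2 : X ++ Rest = (X ++ lo) ++ (hi ++ st.placed) := by
        rw [hRest]; simp [List.append_assoc]
      rw [e1, e2]
      exact List.Perm.append_right _ List.perm_append_comm
    exact t1.trans (List.Perm.cons _ t2)
  have hpair_new : ((k, c.2) :: (X ++ Rest)).Pairwise Dj := by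
    rw [List.pairwise_cons]
    constructor
    · intro b hb
      rw [List.mem_append] at hb
      rcases hb with hb | hb
      · exact (smem b hb).2.2
      · exact Dj_mono ssub (le_refl _) (hDjc_rest b hb)
    · rw [List.pairwise_append]
      refine ⟨sdj, hrest_pair, ?_⟩
      intro a ha b hb
      exact Dj_mono (smem a ha).1 (le_refl _) (hDjc_rest b hb)
  constructor
  · -- sorted
    rw [List.append_assoc, List.pairwise_append]
    refine ⟨hlosort, ?_, ?_⟩
    · rw [List.pairwise_append]
      refine ⟨ssort, hhisort, ?_⟩
      intro a ha b hb
      have h1 := (smem a ha).2.1.2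
      have h2 := hc_hi b hb
      omega
    · intro a ha b hb
      rw [List.mem_append] at hb
      have halo := hlo a ha
      rcases hb with hb | hb
      · have := (smem b hb).2.1.1; omega
      · have := hcross2 a ha b (List.mem_cons_of_mem c hb); omega
  · -- freeLt
    intro b hb
    show b.1 < st.T
    rw [List.append_assoc, List.mem_append, List.mem_append] at hb
    have hcT : c.1 < st.T := h.freeLt c hcmem
    rcases hb with hb | hb | hb
    · exact h.freeLt b (by rw [hfe]; exact List.mem_append_left _ hb)
    · have := (smem b hb).2.1.2; omega
    · exact h.freeLt b (by
        rw [hfe]; exact List.mem_append_right _ (List.mem_cons_of_mem c hb))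
  · -- sub
    intro b hb
    rw [List.mem_append] at hb
    rcases hb with hb | hb
    · rw [List.append_assoc, List.mem_append, List.mem_append] at hb
      rcases hb with hb | hb | hb
      · exact h.sub b (by
          rw [hfe]
          exact List.mem_append_left _ (List.mem_append_left _ hb))
      · exact ((smem b hb).1).trans hcsub
      · exact h.sub b (by
          rw [hfe]
          exact List.mem_append_left _
            (List.mem_append_right _ (List.mem_cons_of_mem c hb)))
    · rcases List.mem_cons.mp hb with rfl | hb'
      · exact ssub.trans hcsub
      · exact h.sub _ (List.mem_append_right _ hb')
  · -- dj
    exact (hperm.pairwise_iff (fun h => Dj_symm h)).mpr hpair_new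
  · -- total
    have e1 : totalF st.free = totalF lo + (2 ^ c.1 + totalF hi) := by
      rw [hfe, totalF_append, totalF_cons]
    have e2 : totalF (lo ++ X ++ hi) = totalF lo + totalF X + totalF hi := by
      rw [totalF_append, totalF_append]
    have e3 : totalF ((k, c.2) :: st.placed) = 2 ^ k + totalF st.placed := totalF_cons _ _
    have := h.total
    show (2:ℝ) ^ st.T ≤ totalF (lo ++ X ++ hi) + totalF ((k, c.2) :: st.placed)
    rw [e2, e3, stot]
    linarith
  · -- ne
    simp

lemma grow1_T (st : St) : (grow1 st).T = st.T + 1 := rfl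
lemma grow1_placed (st : St) : (grow1 st).placed = st.placed := rfl

lemma grow1_ginv (st : St) (h : GInv st) : GInv (grow1 st) := by
  set sib : Brk := (st.T, ((0:ℝ), (0:ℝ)) + off (st.T + 1)) with hsib
  have hc1 : bSet (st.T, ((0:ℝ), (0:ℝ))) ⊆ bSet (st.T + 1, ((0:ℝ), (0:ℝ))) := by
    have := child1_sub (st.T + 1) ((0:ℝ), (0:ℝ))
    rwa [show st.T + 1 - 1 = st.T by ring] at this
  have hc2 : bSet sib ⊆ bSet (st.T + 1, ((0:ℝ), (0:ℝ))) := by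
    have := child2_sub (st.T + 1) ((0:ℝ), (0:ℝ))
    rwa [show st.T + 1 - 1 = st.T by ring] at this
  have hdj12 : Dj (st.T, ((0:ℝ), (0:ℝ))) sib := by
    have := child_dj (st.T + 1) ((0:ℝ), (0:ℝ))
    rwa [show st.T + 1 - 1 = st.T by ring] at this
  constructor
  · rw [grow1, List.pairwise_append]
    refine ⟨h.sorted, List.pairwise_singleton _ _, ?_⟩
    intro a ha b hb
    rw [List.mem_singleton] at hb
    subst hb
    exact h.freeLt a ha
  · intro b hb
    rw [grow1, List.mem_append] at hb
    rcases hb with hb | hb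
    · have := h.freeLt b hb; show b.1 < st.T + 1; omega
    · rw [List.mem_singleton] at hb; subst hb; show st.T < st.T + 1; omega
  · intro b hb
    rw [grow1, List.append_assoc, List.mem_append] at hb
    rcases hb with hb | hb
    · exact (h.sub b (List.mem_append_left _ hb)).trans hc1
    · rcases List.mem_append.mp hb with hb' | hb'
      · rw [List.mem_singleton] at hb'; subst hb'; exact hc2
      · exact (h.sub b (List.mem_append_right _ hb')).trans hc1
  · have hperm : (((st.free ++ [sib]) ++ st.placed)).Perm (sib :: (st.free ++ st.placed)) := by
      have h1 : (st.free ++ [sib]).Perm ([sib] ++ st.free) := List.perm_append_comm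
      have := h1.append_right st.placed
      simpa using this
    apply (hperm.pairwise_iff (fun h => Dj_symm h)).mpr
    rw [List.pairwise_cons]
    refine ⟨?_, h.dj⟩
    intro b hb
    exact Dj_symm (Dj_mono (h.sub b hb) (le_refl _) hdj12)
  · show (2:ℝ) ^ (st.T + 1) ≤ totalF (st.free ++ [sib]) + totalF st.placed
    rw [totalF_append, totalF_cons, totalF_nil]
    have := h.total
    have hpow : (2:ℝ) ^ (st.T + 1) = 2 ^ st.T + 2 ^ st.T := by
      rw [zpow_add_one₀ (by norm_num : (2:ℝ) ≠ 0)]; ring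
    show (2:ℝ) ^ (st.T + 1) ≤ totalF st.free + ((2:ℝ) ^ st.T + 0) + totalF st.placed
    linarith
  · exact h.ne

lemma growN_T (n : ℕ) : ∀ st : St, (growN n st).T = st.T + n := by
  induction n with
  | zero => intro st; simp [growN]
  | succ n ih =>
    intro st
    show (growN n (grow1 st)).T = st.T + ((n:ℤ) + 1)
    rw [ih (grow1 st), grow1_T]; ring

lemma growN_placed (n : ℕ) : ∀ st : St, (growN n st).placed = st.placed := by
  induction n with
  | zero => intro st; simp [growN]
  | succ n ih =>
    intro st
    show (growN n (grow1 st)).placed = st.placed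
    rw [ih (grow1 st), grow1_placed]

lemma growN_ginv (n : ℕ) : ∀ st : St, GInv st → GInv (growN n st) := by
  induction n with
  | zero => intro st h; exact h
  | succ n ih => intro st h; exact ih (grow1 st) (grow1_ginv st h)

lemma growN_exists (n : ℕ) : ∀ st : St, 1 ≤ n →
    ∃ b ∈ (growN n st).free, b.1 = st.T + n - 1 := by
  induction n with
  | zero => intro st h; omega
  | succ n ih =>
    intro st _
    rcases Nat.eq_zero_or_pos n with h0 | hpos
    · subst h0
      refine ⟨(st.T, ((0:ℝ), (0:ℝ)) + off (st.T + 1)), ?_, by push_cast; ring⟩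
      show _ ∈ (growN 0 (grow1 st)).free
      simp [growN, grow1]
    · obtain ⟨b, hb, hval⟩ := ih (grow1 st) hpos
      refine ⟨b, hb, ?_⟩
      rw [hval, grow1_T]; push_cast; ring

noncomputable def step (st : St) (x : ℝ) : St :=
  if st.placed = [] then
    ⟨cls x + 1, [(cls x, ((0:ℝ), (0:ℝ)) + off (cls x + 1))], [(cls x, ((0:ℝ), (0:ℝ)))]⟩
  else
    match pick (cls x) (if (pick (cls x) st.free).isSome then st
        else growN (max st.T (cls x) + 1 - st.T).toNat st).free with
    | none => st
    | some (lo, c, hi) =>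
        ⟨(if (pick (cls x) st.free).isSome then st
            else growN (max st.T (cls x) + 1 - st.T).toNat st).T,
         lo ++ splitFrees (c.1 - cls x).toNat c.1 c.2 ++ hi,
         (cls x, c.2) :: st.placed⟩

noncomputable def run (l : List ℝ) : St := l.foldl step ⟨0, [], []⟩

noncomputable def sigma (l : List ℝ) : ℝ × ℝ := (run l).placed.headI.2

lemma step_of_ne (st : St) (x : ℝ) (hne : st.placed ≠ []) (st1 : St)
    (hst1 : st1 = if (pick (cls x) st.free).isSome then st
        else growN (max st.T (cls x) + 1 - st.T).toNat st)
    {lo hi : List Brk} {c : Brk} (hp : pick (cls x) st1.free = some (lo, c, hi)) :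
    step st x = ⟨st1.T, lo ++ splitFrees (c.1 - cls x).toNat c.1 c.2 ++ hi,
      (cls x, c.2) :: st.placed⟩ := by
  rw [step, if_neg hne, ← hst1, hp]

lemma step_succ (st : St) (x : ℝ) (h : GInv st)
    (htot : (2:ℝ) ^ (st.T - 1) ≤ totalF st.placed) :
    ∃ q, (step st x).placed = (cls x, q) :: st.placed ∧ GInv (step st x) ∧
      (2:ℝ) ^ ((step st x).T - 1) ≤ totalF ((step st x).placed) := by
  set st1 := if (pick (cls x) st.free).isSome then st
      else growN (max st.T (cls x) + 1 - st.T).toNat st with hst1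
  have h1 : GInv st1 := by
    rw [hst1]; split
    · exact h
    · exact growN_ginv _ st h
  have hplaced1 : st1.placed = st.placed := by
    rw [hst1]; split
    · rfl
    · exact growN_placed _ st
  have hsome : (pick (cls x) st1.free).isSome := by
    by_cases hS : (pick (cls x) st.free).isSome
    · rw [hst1, if_pos hS]; exact hS
    · rw [hst1, if_neg hS]
      have hml : st.T ≤ max st.T (cls x) := le_max_left _ _
      have hmr : cls x ≤ max st.T (cls x) := le_max_right _ _
      have hg1 : 1 ≤ (max st.T (cls x) + 1 - st.T).toNat := by omega
      obtain ⟨b, hb, hval⟩ := growN_exists _ st hg1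
      apply pick_isSome
      refine ⟨b, hb, ?_⟩
      rw [hval]
      have : ((max st.T (cls x) + 1 - st.T).toNat : ℤ) = max st.T (cls x) + 1 - st.T := by
        omega
      rw [this]
      omega
  obtain ⟨y, hp⟩ := Option.isSome_iff_exists.mp hsome
  obtain ⟨lo, c, hi⟩ := y
  have hstep : step st x = ⟨st1.T, lo ++ splitFrees (c.1 - cls x).toNat c.1 c.2 ++ hi,
      (cls x, c.2) :: st.placed⟩ :=
    step_of_ne st x h.ne st1 hst1 hp
  have hpl := place_inv st1 (cls x) lo hi c hp h1
  rw [hplaced1] at hpl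
  refine ⟨c.2, by rw [hstep], ?_, ?_⟩
  · rw [hstep]; exact hpl
  · rw [hstep]
    show (2:ℝ) ^ (st1.T - 1) ≤ totalF ((cls x, c.2) :: st.placed)
    rw [totalF_cons]
    by_cases hS : (pick (cls x) st.free).isSome
    · have he : st1 = st := by rw [hst1, if_pos hS]
      rw [he]
      have hpos : (0:ℝ) < 2 ^ (cls x) := by positivity
      have hmono : (2:ℝ) ^ (st.T - 1) ≤ totalF st.placed := htot
      linarith
    · have hml : st.T ≤ max st.T (cls x) := le_max_left _ _
      have hT1 : st1.T = max st.T (cls x) + 1 := by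
        rw [hst1, if_neg hS, growN_T]
        omega
      rw [hT1]
      have hnone : pick (cls x) st.free = none := Option.not_isSome_iff_eq_none.mp hS
      have hfree_lt := pick_eq_none hnone
      have hfle : totalF st.free ≤ 2 ^ (cls x) := totalF_le st.free (cls x) h.sorted hfree_lt
      have htotal := h.total
      have hplnn := totalF_nonneg st.placed
      rcases le_or_gt st.T (cls x) with hc | hc
      · rw [max_eq_right hc, show cls x + 1 - 1 = cls x by ring]
        linarith
      · rw [max_eq_left hc.le, show st.T + 1 - 1 = st.T by ring]
        linarith

lemma step_init (x : ℝ) :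
    step ⟨0, [], []⟩ x
      = ⟨cls x + 1, [(cls x, ((0:ℝ), (0:ℝ)) + off (cls x + 1))], [(cls x, ((0:ℝ), (0:ℝ)))]⟩ := by
  rw [step, if_pos rfl]

lemma init_inv (x : ℝ) :
    GInv (step ⟨0, [], []⟩ x) ∧
    (2:ℝ) ^ ((step ⟨0, [], []⟩ x).T - 1) ≤ totalF ((step ⟨0, [], []⟩ x).placed) ∧
    (step ⟨0, [], []⟩ x).placed = [(cls x, ((0:ℝ), (0:ℝ)))] := by
  rw [step_init]
  set k := cls x with hk
  have hc1 : bSet (k, ((0:ℝ), (0:ℝ))) ⊆ bSet (k + 1, ((0:ℝ), (0:ℝ))) := by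
    have := child1_sub (k + 1) ((0:ℝ), (0:ℝ))
    rwa [show k + 1 - 1 = k by ring] at this
  have hc2 : bSet ((k, ((0:ℝ), (0:ℝ)) + off (k + 1)) : Brk) ⊆ bSet (k + 1, ((0:ℝ), (0:ℝ))) := by
    have := child2_sub (k + 1) ((0:ℝ), (0:ℝ))
    rwa [show k + 1 - 1 = k by ring] at this
  have hdj12 : Dj (k, ((0:ℝ), (0:ℝ))) ((k, ((0:ℝ), (0:ℝ)) + off (k + 1)) : Brk) := by
    have := child_dj (k + 1) ((0:ℝ), (0:ℝ))
    rwa [show k + 1 - 1 = k by ring] at this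
  have hpow : (2:ℝ) ^ (k + 1) = 2 ^ k + 2 ^ k := by
    rw [zpow_add_one₀ (by norm_num : (2:ℝ) ≠ 0)]; ring
  refine ⟨⟨?_, ?_, ?_, ?_, ?_, ?_⟩, ?_, rfl⟩
  · exact List.pairwise_singleton _ _
  · intro b hb
    replace hb : b ∈ [((k : ℤ), ((0:ℝ), (0:ℝ)) + off (k + 1))] := hb
    rw [List.mem_singleton] at hb
    subst hb
    show k < k + 1
    omega
  · intro b hb
    replace hb : b ∈ [((k : ℤ), ((0:ℝ), (0:ℝ)) + off (k + 1))]
        ++ [((k : ℤ), ((0:ℝ), (0:ℝ)))] := hb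
    simp only [List.mem_append, List.mem_singleton] at hb
    rcases hb with rfl | rfl
    · exact hc2
    · exact hc1
  · show List.Pairwise Dj [(k, ((0:ℝ), (0:ℝ)) + off (k + 1)), (k, ((0:ℝ), (0:ℝ)))]
    rw [List.pairwise_cons]
    refine ⟨?_, List.pairwise_singleton _ _⟩
    intro b hb
    rw [List.mem_singleton] at hb
    subst hb
    exact Dj_symm hdj12
  · show (2:ℝ) ^ (k + 1) ≤ totalF [(k, ((0:ℝ), (0:ℝ)) + off (k + 1))] + totalF [(k, ((0:ℝ), (0:ℝ)))]
    rw [totalF_cons, totalF_cons, totalF_nil]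
    linarith
  · simp
  · show (2:ℝ) ^ (k + 1 - 1) ≤ totalF [(k, ((0:ℝ), (0:ℝ)))]
    rw [show k + 1 - 1 = k by ring, totalF_cons, totalF_nil]
    linarith

noncomputable def xv {n : ℕ} (x : Fin n → ℝ) (i : ℕ) : ℝ :=
  if h : i < n then x ⟨i, h⟩ else 1

noncomputable def pre {n : ℕ} (x : Fin n → ℝ) (m : ℕ) : List ℝ := (List.ofFn x).take m

noncomputable def bk {n : ℕ} (x : Fin n → ℝ) (i : ℕ) : Brk :=
  (run (pre x (i+1))).placed.headI

noncomputable def Bl {n : ℕ} (x : Fin n → ℝ) : ℕ → List Brk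
  | 0 => []
  | m+1 => bk x m :: Bl x m

lemma pre_succ {n : ℕ} (x : Fin n → ℝ) (m : ℕ) (hm : m < n) :
    pre x (m+1) = pre x m ++ [xv x m] := by
  have hlen : m < (List.ofFn x).length := by rw [List.length_ofFn]; exact hm
  rw [pre, pre, List.take_succ, List.getElem?_eq_getElem hlen, List.getElem_ofFn]
  rw [xv, dif_pos hm]
  rfl

lemma run_append_one (l : List ℝ) (y : ℝ) : run (l ++ [y]) = step (run l) y := by
  rw [run, run, List.foldl_append]
  rfl

lemma main_inv {n : ℕ} (x : Fin n → ℝ) (hx : ∀ i, 0 < x i) :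
    ∀ m, 1 ≤ m → m ≤ n →
      GInv (run (pre x m)) ∧
      (2:ℝ) ^ ((run (pre x m)).T - 1) ≤ totalF ((run (pre x m)).placed) ∧
      (run (pre x m)).placed = Bl x m ∧
      (∀ i, i < m → (bk x i).1 = cls (xv x i)) := by
  intro m
  induction m with
  | zero => intro h1 _; omega
  | succ m ih =>
    intro _ h2
    rcases Nat.eq_zero_or_pos m with rfl | hm
    · -- base case m+1 = 1
      have hrun : run (pre x 1) = step ⟨0, [], []⟩ (xv x 0) := by
        rw [pre_succ x 0 (by omega), run_append_one]
        rfl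
      obtain ⟨hg, ht, hpl⟩ := init_inv (xv x 0)
      have hbk : bk x 0 = (cls (xv x 0), ((0:ℝ), (0:ℝ))) := by
        rw [bk, hrun, hpl]
        rfl
      refine ⟨by rw [hrun]; exact hg, by rw [hrun]; exact ht, ?_, ?_⟩
      · rw [hrun, hpl]
        show _ = [bk x 0]
        rw [hbk]
      · intro i hi
        have : i = 0 := by omega
        subst this
        rw [hbk]
    · -- inductive step
      obtain ⟨ig, it, ipl, icls⟩ := ih hm (by omega)
      have hrun : run (pre x (m+1)) = step (run (pre x m)) (xv x m) := by
        rw [pre_succ x m (by omega), run_append_one]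
      obtain ⟨q, hq1, hq2, hq3⟩ := step_succ (run (pre x m)) (xv x m) ig it
      have hbk : bk x m = (cls (xv x m), q) := by
        rw [bk, hrun, hq1]
        rfl
      refine ⟨by rw [hrun]; exact hq2, by rw [hrun]; exact hq3, ?_, ?_⟩
      · rw [hrun, hq1]
        show _ = bk x m :: Bl x m
        rw [hbk, ipl]
      · intro i hi
        rcases Nat.lt_succ_iff_lt_or_eq.mp hi with hi' | rfl
        · exact icls i hi'
        · rw [hbk]

lemma bk_mem {n : ℕ} (x : Fin n → ℝ) : ∀ m i, i < m → bk x i ∈ Bl x m := by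
  intro m
  induction m with
  | zero => intro i hi; omega
  | succ m ih =>
    intro i hi
    rcases Nat.lt_succ_iff_lt_or_eq.mp hi with hi' | rfl
    · exact List.mem_cons_of_mem _ (ih i hi')
    · exact List.mem_cons_self

lemma dj_of_ne {n : ℕ} (x : Fin n → ℝ) : ∀ m, (Bl x m).Pairwise Dj →
    ∀ i j, i < m → j < m → i ≠ j → Dj (bk x i) (bk x j) := by
  intro m
  induction m with
  | zero => intro _ i j hi; omega
  | succ m ih =>
    intro hp i j hi hj hne
    rw [show Bl x (m+1) = bk x m :: Bl x m from rfl, List.pairwise_cons] at hp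
    obtain ⟨hhead, htail⟩ := hp
    rcases Nat.lt_succ_iff_lt_or_eq.mp hi with hi' | heqi
    · rcases Nat.lt_succ_iff_lt_or_eq.mp hj with hj' | heqj
      · exact ih htail i j hi' hj' hne
      · rw [heqj]; exact Dj_symm (hhead _ (bk_mem x m i hi'))
    · rcases Nat.lt_succ_iff_lt_or_eq.mp hj with hj' | heqj
      · rw [heqi]; exact hhead _ (bk_mem x m j hj')
      · omega

lemma totalF_Bl {n : ℕ} (x : Fin n → ℝ) : ∀ m,
    totalF (Bl x m) = ∑ i ∈ Finset.range m, (2:ℝ) ^ (bk x i).1 := by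
  intro m
  induction m with
  | zero => simp [Bl, totalF_nil]
  | succ m ih =>
    rw [show Bl x (m+1) = bk x m :: Bl x m from rfl, totalF_cons, ih,
      Finset.sum_range_succ]
    ring

lemma square_sub {n : ℕ} (x : Fin n → ℝ) (hx : ∀ i, 0 < x i) (i : Fin n)
    (hcls : (bk x (i:ℕ)).1 = cls (x i)) :
    placedSquare (sigma (pre x ((i:ℕ)+1))) (x i) ⊆ bSet (bk x (i:ℕ)) := by
  have h2 : (bk x (i:ℕ)).2 = sigma (pre x ((i:ℕ)+1)) := rfl
  have hfit : x i ≤ s (cls (x i)) := le_s_cls (hx i)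
  rw [placedSquare, bSet, ← h2]
  apply Set.prod_mono
  · apply Set.Icc_subset_Icc_right
    apply add_le_add_right
    rw [hcls]
    exact hfit.trans (s_le_W _)
  · apply Set.Icc_subset_Icc_right
    apply add_le_add_right
    rw [hcls]
    exact hfit.trans (s_le_H _)

lemma xv_coe {n : ℕ} (x : Fin n → ℝ) (i : Fin n) : xv x (i:ℕ) = x i := by
  rw [xv, dif_pos i.2]

lemma sum_filter_eq {n : ℕ} (x : Fin n → ℝ) (m : ℕ) (hmn : m ≤ n) :
    ∑ i ∈ Finset.univ.filter (fun i : Fin n => (i:ℕ) < m), (x i)^2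
      = ∑ i ∈ Finset.range m, (xv x i)^2 := by
  rw [Finset.sum_filter]
  have h1 : ∀ i : Fin n, (if (i:ℕ) < m then (x i)^2 else 0)
      = (fun j => if j < m then (xv x j)^2 else 0) (i:ℕ) := by
    intro i
    by_cases h : (i:ℕ) < m
    · simp only [if_pos h, xv_coe]
    · simp only [if_neg h]
  rw [Finset.sum_congr rfl (fun i _ => h1 i),
    Fin.sum_univ_eq_sum_range (fun j => if j < m then (xv x j)^2 else 0) n,
    ← Finset.sum_subset (Finset.range_subset_range.mpr hmn)
      (fun j _ hj => if_neg (fun hcon => hj (Finset.mem_range.mpr hcon)))]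
  exact Finset.sum_congr rfl (fun j hj => if_pos (Finset.mem_range.mp hj))

end DBA

open DBA

/-- The Dynamic Brick Algorithm maintains a packing density of at least 1/8: there is
a valid online placement strategy such that, at every stage `m` of every input
sequence, the total area of the first `m` squares is at least 1/8 of the area of the
smallest axis-parallel square enclosing them. -/
theorem dynamic_brick_density_lower_bound :
    ∃ σ : List ℝ → ℝ × ℝ, ValidStrategy σ ∧
      ∀ (n : ℕ) (x : Fin n → ℝ), (∀ i, 0 < x i) →
        ∀ m : ℕ, 1 ≤ m → m ≤ n →
          (1 / 8) * (minSide (⋃ i : Fin n, ⋃ (_ : (i : ℕ) < m), place σ x i)) ^ 2 ≤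
            ∑ i ∈ Finset.univ.filter (fun i : Fin n => (i : ℕ) < m), (x i) ^ 2 := by
  refine ⟨DBA.sigma, ?_, ?_⟩
  · -- validity
    intro n x hx i j hij
    have hn : 0 < n := i.pos
    obtain ⟨hg, ht, hpl, hcls⟩ := main_inv x hx n hn (le_refl n)
    have hpair : (Bl x n).Pairwise Dj := by
      have hd := hg.dj
      rw [hpl] at hd
      exact (List.pairwise_append.mp hd).2.1
    have hvij : (i:ℕ) ≠ (j:ℕ) := fun h => hij (Fin.val_injective h)
    have hdj : Dj (bk x (i:ℕ)) (bk x (j:ℕ)) :=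
      dj_of_ne x n hpair _ _ i.2 j.2 hvij
    have hclsi : (bk x (i:ℕ)).1 = cls (x i) := by rw [hcls _ i.2, xv_coe]
    have hclsj : (bk x (j:ℕ)).1 = cls (x j) := by rw [hcls _ j.2, xv_coe]
    have hsubi : place DBA.sigma x i ⊆ bSet (bk x (i:ℕ)) := square_sub x hx i hclsi
    have hsubj : place DBA.sigma x j ⊆ bSet (bk x (j:ℕ)) := square_sub x hx j hclsj
    have hInti : interior (place DBA.sigma x i) ⊆ oSet (bk x (i:ℕ)) :=
      (oSet_eq_interior _) ▸ interior_mono hsubi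
    have hIntj : interior (place DBA.sigma x j) ⊆ oSet (bk x (j:ℕ)) :=
      (oSet_eq_interior _) ▸ interior_mono hsubj
    exact hdj.mono hInti hIntj
  · -- density
    intro n x hx m hm1 hmn
    obtain ⟨hg, ht, hpl, hcls⟩ := main_inv x hx m hm1 hmn
    have hn : 0 < n := lt_of_lt_of_le hm1 hmn
    set T := (run (pre x m)).T with hT
    set U := ⋃ i : Fin n, ⋃ (_ : (i : ℕ) < m), place DBA.sigma x i with hU
    -- U is contained in the square [0, s (T+1)]²
    have hUsub : U ⊆ Icc 0 (0 + s (T+1)) ×ˢ Icc 0 (0 + s (T+1)) := by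
      rw [hU]
      apply Set.iUnion₂_subset
      intro i hi
      have hclsi : (bk x (i:ℕ)).1 = cls (x i) := by rw [hcls _ hi, xv_coe]
      have h1 : place DBA.sigma x i ⊆ bSet (bk x (i:ℕ)) := square_sub x hx i hclsi
      have h2 : bSet (bk x (i:ℕ)) ⊆ bSet (T, ((0:ℝ), (0:ℝ))) := by
        apply hg.sub
        rw [hpl]
        exact List.mem_append_right _ (bk_mem x m _ hi)
      have h3 : bSet ((T, ((0:ℝ), (0:ℝ))) : Brk) ⊆ Icc 0 (0 + s (T+1)) ×ˢ Icc 0 (0 + s (T+1)) := by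
        rw [bSet]
        exact Set.prod_mono (Set.Icc_subset_Icc_right (add_le_add_right (W_le T) _))
          (Set.Icc_subset_Icc_right (add_le_add_right (H_le T) _))
      exact (h1.trans h2).trans h3
    have hmemΩ : s (T+1) ∈ {t : ℝ | ∃ a b : ℝ, U ⊆ Icc a (a + t) ×ˢ Icc b (b + t)} :=
      ⟨0, 0, hUsub⟩
    -- U is nonempty
    have hqU : DBA.sigma ((List.ofFn x).take ((0:ℕ) + 1)) ∈ U := by
      rw [hU]
      apply Set.mem_iUnion₂.mpr
      refine ⟨⟨0, hn⟩, hm1, ?_⟩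
      set q := DBA.sigma ((List.ofFn x).take ((0:ℕ) + 1)) with hq
      show q ∈ placedSquare q (x ⟨0, hn⟩)
      rw [placedSquare]
      have hx0 := hx ⟨0, hn⟩
      exact Set.mem_prod.mpr ⟨Set.mem_Icc.mpr ⟨le_refl _, by linarith⟩,
        Set.mem_Icc.mpr ⟨le_refl _, by linarith⟩⟩
    have hlb : ∀ t ∈ {t : ℝ | ∃ a b : ℝ, U ⊆ Icc a (a + t) ×ˢ Icc b (b + t)}, (0:ℝ) ≤ t := by
      rintro t ⟨a, b, hsub⟩
      have hmem := hsub hqU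
      have h1 := (Set.mem_prod.mp hmem).1
      rw [Set.mem_Icc] at h1
      linarith [h1.1, h1.2]
    have hEle : minSide U ≤ s (T+1) := csInf_le ⟨0, fun t ht => hlb t ht⟩ hmemΩ
    have hE0 : 0 ≤ minSide U := le_csInf ⟨s (T+1), hmemΩ⟩ hlb
    have hEsq : minSide U ^ 2 ≤ s (T+1) ^ 2 := pow_le_pow_left₀ hE0 hEle 2
    rw [s_sq] at hEsq
    -- area bound
    have htot : (2:ℝ) ^ (T - 1) ≤ totalF (Bl x m) := by rw [← hpl]; exact ht
    rw [totalF_Bl] at htot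
    have hsum : ∑ i ∈ Finset.range m, (2:ℝ) ^ (bk x i).1
        ≤ ∑ i ∈ Finset.range m, 2 * (xv x i)^2 := by
      apply Finset.sum_le_sum
      intro i hi
      have him : i < m := Finset.mem_range.mp hi
      rw [hcls i him]
      have hpos : 0 < xv x i := by
        rw [xv, dif_pos (lt_of_lt_of_le him hmn)]
        exact hx _
      exact cls_le_sq hpos
    have hS : ∑ i ∈ Finset.univ.filter (fun i : Fin n => (i : ℕ) < m), (x i)^2
        = ∑ i ∈ Finset.range m, (xv x i)^2 := sum_filter_eq x m hmn
    have h8 : (2:ℝ) ^ (T + 1) = 8 * 2 ^ (T - 2) := by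
      rw [show T + 1 = (T - 2) + 3 by ring, zpow_add₀ (by norm_num : (2:ℝ) ≠ 0)]
      norm_num
      ring
    have h4 : (2:ℝ) ^ (T - 1) = 2 * 2 ^ (T - 2) := by
      rw [show T - 1 = (T - 2) + 1 by ring, zpow_add_one₀ (by norm_num : (2:ℝ) ≠ 0)]
      ring
    rw [hS]
    have hmul : ∑ i ∈ Finset.range m, 2 * (xv x i)^2
        = 2 * ∑ i ∈ Finset.range m, (xv x i)^2 := by
      rw [Finset.mul_sum]
    rw [hmul] at hsum
    linarith
end

section
/- There exists a valid online placement strategy σ such that for every finite sequence x₁, …, xₙ of positive side lengths and every m with 1 ≤ m ≤ n, the minimum side length Eₘ of an axis-parallel square containing the first m placed squares satisfies Eₘ ≤ 2√2 · Opt(x₁,…,xₘ), where Opt(x₁,…,xₘ) denotes the infimum of all s > 0 such that axis-parallel squares of side lengths x₁,…,xₘ can be placed with pairwise disjoint interiors inside the square [0,s]². (Dynamic Brick Packing is 2√2-competitive for packing an online sequence of squares into a square container of small edge length.) -/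
open Set

/-- The optimal (offline) container size for squares of side lengths `x₁, …, xₘ`:
the infimum of all `s > 0` such that the squares can be placed inside `[0,s]²`
with pairwise disjoint interiors. -/
noncomputable def Opt {m : ℕ} (x : Fin m → ℝ) : ℝ :=
  sInf {s : ℝ | 0 < s ∧ ∃ p : Fin m → ℝ × ℝ,
    (∀ i, placedSquare (p i) (x i) ⊆ Icc (0 : ℝ) s ×ˢ Icc (0 : ℝ) s) ∧
    ∀ i j, i ≠ j →
      Disjoint (interior (placedSquare (p i) (x i)))
        (interior (placedSquare (p j) (x j)))}

noncomputable section

namespace DBP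

def rt2 : ℝ := Real.sqrt 2

lemma rt2_pos : 0 < rt2 := Real.sqrt_pos.2 (by norm_num)
lemma one_lt_rt2 : 1 < rt2 := by
  rw [rt2, show (1:ℝ) = Real.sqrt 1 by simp]
  exact Real.sqrt_lt_sqrt (by norm_num) (by norm_num)
lemma rt2_sq : rt2 * rt2 = 2 := Real.mul_self_sqrt (by norm_num)

/-- scale of class `k`: the shorter side of a class-`k` brick. -/
def d (k : ℤ) : ℝ := rt2 ^ k

lemma d_pos (k : ℤ) : 0 < d k := zpow_pos rt2_pos k
lemma d_succ (k : ℤ) : d (k + 1) = rt2 * d k := by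
  rw [d, d, zpow_add_one₀ (ne_of_gt rt2_pos), mul_comm]
lemma d_mono {j k : ℤ} (h : j ≤ k) : d j ≤ d k :=
  zpow_le_zpow_right₀ (le_of_lt one_lt_rt2) h
lemma d_sq (k : ℤ) : d k * d k = 2 ^ k := by
  rw [d, ← zpow_add₀ (ne_of_gt rt2_pos)]
  rw [show ((2:ℝ)) = rt2 * rt2 from rt2_sq.symm, mul_zpow,
    ← zpow_add₀ (ne_of_gt rt2_pos)]

/-- requested class for a square of side `x`. -/
def req (x : ℝ) : ℤ := ⌈Real.logb rt2 x⌉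

lemma le_d_req {x : ℝ} (hx : 0 < x) : x ≤ d (req x) := by
  have h1 : x = rt2 ^ (Real.logb rt2 x) := (Real.rpow_logb rt2_pos (ne_of_gt one_lt_rt2) hx).symm
  have h2 : rt2 ^ (Real.logb rt2 x) ≤ rt2 ^ ((req x : ℤ) : ℝ) :=
    Real.rpow_le_rpow_of_exponent_le (le_of_lt one_lt_rt2) (by exact_mod_cast Int.le_ceil _)
  calc x = rt2 ^ (Real.logb rt2 x) := h1
    _ ≤ rt2 ^ ((req x : ℤ) : ℝ) := h2
    _ = d (req x) := by rw [Real.rpow_intCast]; rfl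

lemma d_req_le {x : ℝ} (hx : 0 < x) : d (req x) ≤ rt2 * x := by
  have h1 : rt2 ^ ((req x : ℤ) : ℝ) ≤ rt2 ^ (Real.logb rt2 x + 1) := by
    apply Real.rpow_le_rpow_of_exponent_le (le_of_lt one_lt_rt2)
    have := Int.ceil_lt_add_one (Real.logb rt2 x)
    exact_mod_cast this.le
  have h2 : rt2 ^ (Real.logb rt2 x + 1) = x * rt2 := by
    rw [Real.rpow_add rt2_pos, Real.rpow_logb rt2_pos (ne_of_gt one_lt_rt2) hx, Real.rpow_one]
  calc d (req x) = rt2 ^ ((req x : ℤ) : ℝ) := by rw [Real.rpow_intCast]; rfl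
    _ ≤ rt2 ^ (Real.logb rt2 x + 1) := h1
    _ = rt2 * x := by rw [h2, mul_comm]

/-- area of a class-`k` brick. -/
def barea (k : ℤ) : ℝ := rt2 * 2 ^ k

lemma barea_pos (k : ℤ) : 0 < barea k := mul_pos rt2_pos (zpow_pos (by norm_num) k)
lemma barea_succ (k : ℤ) : barea (k + 1) = barea k + barea k := by
  rw [barea, barea, zpow_add_one₀ (by norm_num : (2:ℝ) ≠ 0)]; ring
lemma barea_mono {j k : ℤ} (h : j ≤ k) : barea j ≤ barea k := by
  apply mul_le_mul_of_nonneg_left _ (le_of_lt rt2_pos)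
  exact zpow_le_zpow_right₀ (by norm_num) h
lemma barea_eq_d_sq (k : ℤ) : barea k = rt2 * (d k * d k) := by rw [barea, d_sq]

lemma barea_req_le {x : ℝ} (hx : 0 < x) : barea (req x) ≤ 2 * rt2 * x ^ 2 := by
  rw [barea_eq_d_sq]
  have h := d_req_le hx
  have h0 : 0 ≤ d (req x) := (d_pos _).le
  have : d (req x) * d (req x) ≤ (rt2 * x) * (rt2 * x) :=
    mul_le_mul h h h0 (by have := rt2_pos; positivity)
  calc rt2 * (d (req x) * d (req x)) ≤ rt2 * ((rt2 * x) * (rt2 * x)) := by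
        exact mul_le_mul_of_nonneg_left this (le_of_lt rt2_pos)
    _ = (rt2 * rt2) * rt2 * x^2 := by ring
    _ = 2 * rt2 * x ^ 2 := by rw [rt2_sq]


/-! ### Bricks -/

structure Brick where
  k : ℤ
  x : ℝ
  y : ℝ

def bw (k : ℤ) : ℝ := if Even k then d (k + 1) else d k
def bh (k : ℤ) : ℝ := if Even k then d k else d (k + 1)

lemma d_le_bw (k : ℤ) : d k ≤ bw k := by
  unfold bw; split
  · exact d_mono (by omega)
  · exact le_rfl
lemma d_le_bh (k : ℤ) : d k ≤ bh k := by
  unfold bh; split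
  · exact le_rfl
  · exact d_mono (by omega)
lemma bw_le (k : ℤ) : bw k ≤ d (k + 1) := by
  unfold bw; split
  · exact le_rfl
  · exact d_mono (by omega)
lemma bh_le (k : ℤ) : bh k ≤ d (k + 1) := by
  unfold bh; split
  · exact d_mono (by omega)
  · exact le_rfl
lemma bw_pos (k : ℤ) : 0 < bw k := lt_of_lt_of_le (d_pos k) (d_le_bw k)
lemma bh_pos (k : ℤ) : 0 < bh k := lt_of_lt_of_le (d_pos k) (d_le_bh k)

def bset (b : Brick) : Set (ℝ × ℝ) :=
  Icc b.x (b.x + bw b.k) ×ˢ Icc b.y (b.y + bh b.k)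

def child1 (b : Brick) : Brick := ⟨b.k - 1, b.x, b.y⟩
def child2 (b : Brick) : Brick :=
  if Even b.k then ⟨b.k - 1, b.x + d (b.k - 1), b.y⟩ else ⟨b.k - 1, b.x, b.y + d (b.k - 1)⟩

lemma bw_split {k : ℤ} (h : Even k) : bw k = d (k-1) + d (k-1) := by
  have : bw k = d (k+1) := by unfold bw; simp [h]
  rw [this, show k + 1 = (k-1) + 1 + 1 by ring, d_succ, d_succ]
  have := rt2_sq
  nlinarith [d_pos (k-1)]
lemma bh_split {k : ℤ} (h : ¬ Even k) : bh k = d (k-1) + d (k-1) := by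
  have : bh k = d (k+1) := by unfold bh; simp [h]
  rw [this, show k + 1 = (k-1) + 1 + 1 by ring, d_succ, d_succ]
  have := rt2_sq
  nlinarith [d_pos (k-1)]
lemma bw_child {k : ℤ} (h : Even k) : bw (k-1) = d (k-1) := by
  have h2 : ¬ Even (k-1) := by rw [Int.even_sub_one]; exact not_not_intro h
  unfold bw; simp [h2]
lemma bh_child_odd {k : ℤ} (h : ¬ Even k) : bh (k-1) = d (k-1) := by
  have h2 : Even (k-1) := Int.even_sub_one.mpr h
  unfold bh; simp [h2]


def placedSq (p : ℝ × ℝ) (x : ℝ) : Set (ℝ × ℝ) :=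
  Icc p.1 (p.1 + x) ×ˢ Icc p.2 (p.2 + x)

/-- pairwise interior-disjointness of bricks -/
def PD (b b' : Brick) : Prop := Disjoint (interior (bset b)) (interior (bset b'))

lemma PD.symm' {b b' : Brick} (h : PD b b') : PD b' b := Disjoint.symm h
lemma PD_symm : Symmetric PD := fun _ _ h => h.symm'
lemma PD.mono_left {a b c : Brick} (hs : bset a ⊆ bset b) (h : PD b c) : PD a c :=
  Disjoint.mono_left (interior_mono hs) h
lemma PD.mono_right {a b c : Brick} (hs : bset c ⊆ bset b) (h : PD a b) : PD a c :=
  Disjoint.mono_right (interior_mono hs) h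

lemma disjoint_boxes_x {a1 w1 a2 w2 b1 h1 b2 h2 : ℝ} (h : a1 + w1 ≤ a2) :
    Disjoint (interior (Icc a1 (a1+w1) ×ˢ Icc b1 (b1+h1)))
      (interior (Icc a2 (a2+w2) ×ˢ Icc b2 (b2+h2))) := by
  rw [interior_prod_eq, interior_prod_eq, interior_Icc, interior_Icc,
    interior_Icc, interior_Icc]
  rw [Set.disjoint_left]
  rintro ⟨p1, p2⟩ ⟨hp1, _⟩ ⟨hq1, _⟩
  simp only [mem_Ioo] at hp1 hq1
  linarith [hp1.2, hq1.1]

lemma disjoint_boxes_y {a1 w1 a2 w2 b1 h1 b2 h2 : ℝ} (h : b1 + h1 ≤ b2) :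
    Disjoint (interior (Icc a1 (a1+w1) ×ˢ Icc b1 (b1+h1)))
      (interior (Icc a2 (a2+w2) ×ˢ Icc b2 (b2+h2))) := by
  rw [interior_prod_eq, interior_prod_eq, interior_Icc, interior_Icc,
    interior_Icc, interior_Icc]
  rw [Set.disjoint_left]
  rintro ⟨p1, p2⟩ ⟨_, hp2⟩ ⟨_, hq2⟩
  simp only [mem_Ioo] at hp2 hq2
  linarith [hp2.2, hq2.1]

lemma box_subset {a1 w1 a2 w2 b1 h1 b2 h2 : ℝ} (ha : a2 ≤ a1) (hw : a1 + w1 ≤ a2 + w2)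
    (hb : b2 ≤ b1) (hh : b1 + h1 ≤ b2 + h2) :
    (Icc a1 (a1+w1) ×ˢ Icc b1 (b1+h1)) ⊆ (Icc a2 (a2+w2) ×ˢ Icc b2 (b2+h2)) :=
  Set.prod_mono (Icc_subset_Icc ha hw) (Icc_subset_Icc hb hh)

lemma bset_eq (b : Brick) : bset b = Icc b.x (b.x + bw b.k) ×ˢ Icc b.y (b.y + bh b.k) := rfl

lemma bw_even {k : ℤ} (h : Even k) : bw k = d (k+1) := if_pos h
lemma bh_even {k : ℤ} (h : Even k) : bh k = d k := if_pos h
lemma bw_odd {k : ℤ} (h : ¬ Even k) : bw k = d k := if_neg h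
lemma bh_odd {k : ℤ} (h : ¬ Even k) : bh k = d (k+1) := if_neg h
lemma bh_child_even {k : ℤ} (h : Even k) : bh (k-1) = d k := by
  have h2 : ¬ Even (k-1) := by rw [Int.even_sub_one]; exact not_not_intro h
  rw [bh_odd h2]; congr 1; ring
lemma bw_child_odd {k : ℤ} (h : ¬ Even k) : bw (k-1) = d k := by
  have h2 : Even (k-1) := Int.even_sub_one.mpr h
  rw [bw_even h2]; congr 1; ring

lemma child1_subset (b : Brick) : bset (child1 b) ⊆ bset b := by
  rw [bset_eq, bset_eq, child1]
  by_cases h : Even b.k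
  · rw [bw_child h, bh_child_even h, bw_even h, bh_even h]
    exact box_subset le_rfl (by linarith [d_mono (show b.k - 1 ≤ b.k + 1 by omega)])
      le_rfl le_rfl
  · rw [bw_child_odd h, bh_child_odd h, bw_odd h, bh_odd h]
    exact box_subset le_rfl le_rfl
      le_rfl (by linarith [d_mono (show b.k - 1 ≤ b.k + 1 by omega)])

lemma child2_subset (b : Brick) : bset (child2 b) ⊆ bset b := by
  rw [bset_eq, bset_eq, child2]
  by_cases h : Even b.k
  · simp only [if_pos h]
    rw [bw_child h, bh_child_even h, bw_even h, bh_even h]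
    refine box_subset (by linarith [d_pos (b.k - 1)]) ?_ le_rfl le_rfl
    have := bw_split h; rw [bw_even h] at this; linarith
  · simp only [if_neg h]
    rw [bw_child_odd h, bh_child_odd h, bw_odd h, bh_odd h]
    refine box_subset le_rfl le_rfl (by linarith [d_pos (b.k - 1)]) ?_
    have := bh_split h; rw [bh_odd h] at this; linarith

lemma child_pd (b : Brick) : PD (child1 b) (child2 b) := by
  rw [PD, bset_eq, bset_eq, child1, child2]
  by_cases h : Even b.k
  · simp only [if_pos h]
    rw [bw_child h]
    exact disjoint_boxes_x le_rfl
  · simp only [if_neg h]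
    rw [bh_child_odd h]
    exact disjoint_boxes_y le_rfl

lemma square_subset_bset {b : Brick} {x : ℝ} (hx : x ≤ d b.k) :
    placedSq (b.x, b.y) x ⊆ bset b := by
  rw [placedSq, bset_eq]
  exact box_subset le_rfl (by linarith [d_le_bw b.k]) le_rfl (by linarith [d_le_bh b.k])

/-- the container brick of class `c`, cornered at the origin. -/
def C (c : ℤ) : Brick := ⟨c, 0, 0⟩

lemma child1_C (c : ℤ) : child1 (C (c+1)) = C c := by simp [child1, C]

lemma C_mono {c c' : ℤ} (h : c ≤ c') : bset (C c) ⊆ bset (C c') := by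
  refine Int.le_induction (motive := fun n _ => bset (C c) ⊆ bset (C n)) le_rfl ?_ c' h
  intro n _ ih
  refine ih.trans ?_
  have := child1_subset (C (n+1))
  rwa [child1_C] at this

lemma C_subset_encl (c : ℤ) : bset (C c) ⊆ Icc (0:ℝ) (d (c+1)) ×ˢ Icc (0:ℝ) (d (c+1)) := by
  rw [bset_eq]
  simp only [C]
  have h1 : (0:ℝ) + bw c ≤ 0 + d (c+1) := by simpa using bw_le c
  have h2 : (0:ℝ) + bh c ≤ 0 + d (c+1) := by simpa using bh_le c
  simpa using box_subset le_rfl h1 le_rfl h2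

/-! ### Splitting chains -/

def chain : ℕ → Brick → Brick × List Brick
  | 0, b => (b, [])
  | n+1, b => ((chain n (child1 b)).1, child2 b :: (chain n (child1 b)).2)

lemma chain_fst (n : ℕ) (b : Brick) : (chain n b).1 = ⟨b.k - n, b.x, b.y⟩ := by
  induction n generalizing b with
  | zero => simp [chain]
  | succ n ih =>
      show (chain n (child1 b)).1 = _
      rw [ih]
      simp only [child1, Brick.mk.injEq]
      norm_num
      push_cast; ring

lemma chain_mem_sub (n : ℕ) (b : Brick) : ∀ cb ∈ (chain n b).2, bset cb ⊆ bset b := by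
  induction n generalizing b with
  | zero => simp [chain]
  | succ n ih =>
      intro cb hcb
      rcases List.mem_cons.1 hcb with h | h
      · subst h; exact child2_subset b
      · exact (ih (child1 b) cb h).trans (child1_subset b)

lemma chain_fst_sub (n : ℕ) (b : Brick) : bset (chain n b).1 ⊆ bset b := by
  induction n generalizing b with
  | zero => simp [chain]
  | succ n ih => exact (ih (child1 b)).trans (child1_subset b)

lemma chain_class_mem (n : ℕ) (b : Brick) :
    ∀ cb ∈ (chain n b).2, b.k - n ≤ cb.k ∧ cb.k < b.k := by
  induction n generalizing b with
  | zero => simp [chain]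
  | succ n ih =>
      intro cb hcb
      rcases List.mem_cons.1 hcb with h | h
      · subst h
        constructor
        · show b.k - (n+1:ℕ) ≤ (child2 b).k
          have : (child2 b).k = b.k - 1 := by unfold child2; split <;> rfl
          rw [this]; push_cast; omega
        · have : (child2 b).k = b.k - 1 := by unfold child2; split <;> rfl
          omega
      · have := ih (child1 b) cb h
        have hk : (child1 b).k = b.k - 1 := rfl
        rw [hk] at this
        constructor
        · have := this.1; push_cast at this ⊢; omega
        · omega

lemma chain_nodup (n : ℕ) (b : Brick) : ((chain n b).2.map Brick.k).Nodup := by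
  induction n generalizing b with
  | zero => simp [chain]
  | succ n ih =>
      show (((child2 b) :: (chain n (child1 b)).2).map Brick.k).Nodup
      rw [List.map_cons, List.nodup_cons]
      refine ⟨?_, ih (child1 b)⟩
      intro hmem
      rcases List.mem_map.1 hmem with ⟨cb, hcb, hk⟩
      have := (chain_class_mem n (child1 b) cb hcb).2
      have h2 : (child2 b).k = b.k - 1 := by unfold child2; split <;> rfl
      have h1 : (child1 b).k = b.k - 1 := rfl
      omega

lemma chain_area (n : ℕ) (b : Brick) :
    barea (b.k - n) + ((chain n b).2.map (fun cb => barea cb.k)).sum = barea b.k := by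
  induction n generalizing b with
  | zero => simp [chain]
  | succ n ih =>
      show barea (b.k - (n+1:ℕ)) + ((child2 b :: (chain n (child1 b)).2).map _).sum = _
      rw [List.map_cons, List.sum_cons]
      have h2 : (child2 b).k = b.k - 1 := by unfold child2; split <;> rfl
      have h1 : (child1 b).k = b.k - 1 := rfl
      have := ih (child1 b)
      rw [h1] at this
      have hb : barea b.k = barea (b.k - 1) + barea (b.k - 1) := by
        have := barea_succ (b.k - 1)
        rw [show b.k - 1 + 1 = b.k by ring] at this
        exact this
      rw [h2]
      have hcast : b.k - (n+1:ℕ) = b.k - 1 - n := by push_cast; ring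
      rw [hcast]
      linarith

lemma chain_pairwise (n : ℕ) (b : Brick) :
    ((chain n b).1 :: (chain n b).2).Pairwise PD := by
  induction n generalizing b with
  | zero => simp [chain]
  | succ n ih =>
      show ((chain n (child1 b)).1 :: child2 b :: (chain n (child1 b)).2).Pairwise PD
      have IH := ih (child1 b)
      rw [List.pairwise_cons] at IH ⊢
      obtain ⟨IH1, IH2⟩ := IH
      constructor
      · intro a ha
        rcases List.mem_cons.1 ha with h | h
        · subst h
          exact (child_pd b).mono_left (chain_fst_sub n (child1 b))
        · exact IH1 a h
      · rw [List.pairwise_cons]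
        constructor
        · intro a ha
          exact ((child_pd b).symm').mono_right (chain_mem_sub n (child1 b) a ha)
        · exact IH2

/-! ### Choosing a minimal eligible free brick -/

def pickMin (k : ℤ) : List Brick → Option (Brick × List Brick)
  | [] => none
  | b :: t =>
    match pickMin k t with
    | none => if k ≤ b.k then some (b, t) else none
    | some (c, r) => if k ≤ b.k ∧ b.k ≤ c.k then some (b, t) else some (c, b :: r)

lemma pickMin_none {k : ℤ} : ∀ {l : List Brick}, pickMin k l = none → ∀ b ∈ l, b.k < k := by
  intro l
  induction l with
  | nil => simp
  | cons a t ih =>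
      intro h b hb
      rw [pickMin] at h
      rcases hp : pickMin k t with _ | ⟨c, r⟩ <;> rw [hp] at h
      · simp only at h
        split at h
        · exact absurd h (by simp)
        · rcases List.mem_cons.1 hb with rfl | hb'
          · omega
          · exact ih hp b hb'
      · simp only at h
        split at h <;> exact absurd h (by simp)

lemma pickMin_some {k : ℤ} : ∀ {l : List Brick} {b : Brick} {r : List Brick},
    pickMin k l = some (b, r) →
    l.Perm (b :: r) ∧ k ≤ b.k ∧ ∀ b' ∈ l, k ≤ b'.k → b.k ≤ b'.k := by
  intro l
  induction l with
  | nil => intro b r h; simp [pickMin] at h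
  | cons a t ih =>
      intro b r h
      rw [pickMin] at h
      rcases hp : pickMin k t with _ | ⟨c, s⟩ <;> rw [hp] at h
      · simp only at h
        split at h
        case isTrue hk =>
          obtain ⟨rfl, rfl⟩ : a = b ∧ t = r := by
            injection h with h; injection h with h1 h2; exact ⟨h1, h2⟩
          refine ⟨List.Perm.refl _, hk, ?_⟩
          intro b' hb' _
          rcases List.mem_cons.1 hb' with rfl | hb''
          · exact le_rfl
          · exact absurd (pickMin_none hp b' hb'') (by omega)
        case isFalse => exact absurd h (by simp)
      · simp only at h
        obtain ⟨hperm, hck, hcmin⟩ := ih hp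
        split at h
        case isTrue hk =>
          obtain ⟨rfl, rfl⟩ : a = b ∧ t = r := by
            injection h with h; injection h with h1 h2; exact ⟨h1, h2⟩
          refine ⟨List.Perm.refl _, hk.1, ?_⟩
          intro b' hb' hb'k
          rcases List.mem_cons.1 hb' with rfl | hb''
          · exact le_rfl
          · exact hk.2.trans (hcmin b' hb'' hb'k)
        case isFalse hk =>
          obtain ⟨rfl, rfl⟩ : c = b ∧ a :: s = r := by
            injection h with h; injection h with h1 h2; exact ⟨h1, h2⟩
          refine ⟨?_, hck, ?_⟩
          · exact (hperm.cons a).trans (List.Perm.swap _ a s)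
          · intro b' hb' hb'k
            rcases List.mem_cons.1 hb' with rfl | hb''
            · omega
            · exact hcmin b' hb'' hb'k

/-! ### Sum of distinct powers of two -/

lemma sum_two_zpow_lt : ∀ (n : ℕ) (S : Finset ℤ) (k : ℤ), S.card = n → (∀ j ∈ S, j < k) →
    (∑ j ∈ S, (2:ℝ) ^ j) < 2 ^ k := by
  intro n
  induction n using Nat.strong_induction_on with
  | _ n ih =>
    intro S k hcard hlt
    rcases S.eq_empty_or_nonempty with rfl | hne
    · simpa using zpow_pos (show (0:ℝ) < 2 by norm_num) k
    · set M := S.max' hne with hM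
      have hMS : M ∈ S := S.max'_mem hne
      have hMk : M < k := hlt M hMS
      set S' := S.erase M with hS'
      have hcard' : S'.card = n - 1 := by rw [hS', Finset.card_erase_of_mem hMS, hcard]
      have hn1 : n - 1 < n := by
        have : 0 < n := by rw [← hcard]; exact Finset.card_pos.2 hne
        omega
      have hlt' : ∀ j ∈ S', j < M := by
        intro j hj
        have hle := S.le_max' j (Finset.mem_of_mem_erase hj)
        have hne' := Finset.ne_of_mem_erase hj
        omega
      have IH := ih (n-1) hn1 S' M hcard' hlt'
      have hsum : (∑ j ∈ S, (2:ℝ) ^ j) = 2 ^ M + ∑ j ∈ S', (2:ℝ) ^ j := by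
        rw [hS', Finset.add_sum_erase _ _ hMS]
      rw [hsum]
      have h2 : (2:ℝ) ^ M + (2:ℝ) ^ M = 2 ^ (M + 1) := by
        rw [zpow_add_one₀ (by norm_num : (2:ℝ) ≠ 0)]; ring
      have h3 : (2:ℝ) ^ (M+1) ≤ 2 ^ k :=
        zpow_le_zpow_right₀ (by norm_num) (by omega)
      linarith

lemma sum_barea_le {k : ℤ} (l : List ℤ) (hnd : l.Nodup) (hlt : ∀ j ∈ l, j < k) :
    (l.map barea).sum ≤ barea k := by
  have h1 : (l.map barea).sum = ∑ j ∈ l.toFinset, barea j := by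
    rw [List.sum_toFinset _ hnd]
  rw [h1]
  have h2 : ∑ j ∈ l.toFinset, barea j = rt2 * ∑ j ∈ l.toFinset, (2:ℝ)^j := by
    rw [Finset.mul_sum]; rfl
  rw [h2, barea]
  have h3 := sum_two_zpow_lt l.toFinset.card l.toFinset k rfl
    (fun j hj => hlt j (List.mem_toFinset.1 hj))
  exact mul_le_mul_of_nonneg_left h3.le rt2_pos.le

lemma barea_tele : ∀ (n : ℕ) (c : ℤ),
    barea (c + n) = barea c + ((List.range n).map (fun i : ℕ => barea (c + (i:ℤ)))).sum := by
  intro n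
  induction n with
  | zero => simp
  | succ n ih =>
      intro c
      rw [List.range_succ, List.map_append, List.sum_append]
      have h1 : barea (c + (n+1:ℕ)) = barea (c + n) + barea (c + n) := by
        rw [show (c + (n+1:ℕ)) = (c + n) + 1 by push_cast; ring, barea_succ]
      rw [h1, ih c]
      simp
      linarith [ih c]

/-! ### The algorithm state -/

structure St where
  c : ℤ
  free : List Brick
  homes : List (Brick × ℝ)
  last : ℝ × ℝ

def init : St := ⟨0, [], [], (0, 0)⟩

def step (s : St) (x : ℝ) : St :=
  if x ≤ 0 then s else
  let k := req x
  if s.homes.isEmpty then ⟨k, [], [(⟨k, 0, 0⟩, x)], (0, 0)⟩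
  else
    match pickMin k s.free with
    | some (b, rest) =>
        let t := chain (b.k - k).toNat b
        ⟨s.c, rest ++ t.2, s.homes ++ [(t.1, x)], (t.1.x, t.1.y)⟩
    | none =>
        let K := max s.c k
        let inter : List Brick :=
          (List.range (K - s.c).toNat).map (fun i : ℕ => child2 (C (s.c + i + 1)))
        let bK : Brick := child2 (C (K + 1))
        let t := chain (K - k).toNat bK
        ⟨K + 1, s.free ++ inter ++ t.2, s.homes ++ [(t.1, x)], (t.1.x, t.1.y)⟩

def run (l : List ℝ) : St := l.foldl step init

def strat (l : List ℝ) : ℝ × ℝ := (run l).last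

lemma run_append (l : List ℝ) (x : ℝ) : run (l ++ [x]) = step (run l) x := by
  rw [run, List.foldl_append]; rfl

lemma step_homes {s : St} {x : ℝ} (hx : 0 < x) :
    ∃ f : Brick, f.k = req x ∧ (step s x).homes = s.homes ++ [(f, x)] ∧
      (step s x).last = (f.x, f.y) ∧ placedSq (step s x).last x ⊆ bset f := by
  have hx' : ¬ x ≤ 0 := not_le.2 hx
  rw [step, if_neg hx']
  have hsq : ∀ f : Brick, f.k = req x → placedSq (f.x, f.y) x ⊆ bset f := by
    intro f hf
    apply square_subset_bset
    rw [hf]; exact le_d_req hx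
  by_cases he : s.homes.isEmpty
  · simp only [if_pos he]
    refine ⟨⟨req x, 0, 0⟩, rfl, ?_, rfl, by simpa using hsq ⟨req x, 0, 0⟩ rfl⟩
    rw [List.isEmpty_iff.1 he]; rfl
  · simp only [if_neg he]
    rcases hp : pickMin (req x) s.free with _ | ⟨b, rest⟩
    · simp only
      set K := max s.c (req x) with hK
      set bK : Brick := child2 (C (K + 1)) with hbK
      refine ⟨(chain (K - req x).toNat bK).1, ?_, rfl, rfl, hsq _ ?_⟩ <;>
      · rw [chain_fst]
        simp only
        have hbKk : bK.k = K := by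
          rw [hbK]; unfold child2 C; split <;> simp
        rw [hbKk]
        omega
    · simp only
      obtain ⟨hperm, hbk, -⟩ := pickMin_some hp
      refine ⟨(chain (b.k - req x).toNat b).1, ?_, rfl, rfl, hsq _ ?_⟩ <;>
      · rw [chain_fst]
        simp only
        omega

lemma child2_k (b : Brick) : (child2 b).k = b.k - 1 := by unfold child2; split <;> rfl

lemma child_pd' (j : ℤ) : PD (C j) (child2 (C (j+1))) := by
  have := child_pd (C (j+1)); rwa [child1_C] at this

lemma Forall₂_append {α β : Type*} {R : α → β → Prop} {l1 : List α} {l2 : List β}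
    {l3 : List α} {l4 : List β}
    (h : List.Forall₂ R l1 l2) (h' : List.Forall₂ R l3 l4) :
    List.Forall₂ R (l1 ++ l3) (l2 ++ l4) := by
  induction h with
  | nil => simpa
  | cons hab _ ih => simp only [List.cons_append]; exact List.Forall₂.cons hab ih

/-! ### The invariant -/

def bricks (s : St) : List Brick := s.free ++ s.homes.map Prod.fst

structure Inv (xs : List ℝ) (s : St) : Prop where
  hpos : ∀ a ∈ xs, 0 < a
  hhomes : List.Forall₂ (fun (x : ℝ) (h : Brick × ℝ) => h.2 = x ∧ h.1.k = req x) xs s.homes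
  hpd : (bricks s).Pairwise PD
  hsub : ∀ b ∈ bricks s, bset b ⊆ bset (C s.c)
  hfc : ∀ b ∈ s.free, b.k < s.c
  hnd : (s.free.map Brick.k).Nodup
  harea : xs ≠ [] → barea s.c =
    (s.free.map (fun b => barea b.k)).sum + (s.homes.map (fun h => barea h.1.k)).sum
  hbound : xs ≠ [] → barea s.c ≤ 4 * rt2 * (xs.map (fun a => a^2)).sum

lemma homes_area_le {xs : List ℝ} {homes : List (Brick × ℝ)}
    (h : List.Forall₂ (fun (x : ℝ) (h : Brick × ℝ) => h.2 = x ∧ h.1.k = req x) xs homes)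
    (hpos : ∀ a ∈ xs, 0 < a) :
    (homes.map (fun h => barea h.1.k)).sum ≤ 2 * rt2 * (xs.map (fun a => a^2)).sum := by
  induction h with
  | nil => simp
  | @cons a b l1 l2 hab htl ih =>
      simp only [List.map_cons, List.sum_cons, List.mem_cons] at *
      have h1 : barea b.1.k ≤ 2 * rt2 * a^2 := by
        rw [hab.2]; exact barea_req_le (hpos a (Or.inl rfl))
      have h2 := ih (fun y hy => hpos y (Or.inr hy))
      rw [mul_add]
      linarith

lemma inv_init : Inv [] init := by
  refine ⟨by simp, by simp [init], by simp [bricks, init], by simp [bricks, init],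
    by simp [init], by simp [init], by simp, by simp⟩

theorem step_inv {xs : List ℝ} {s : St} {x : ℝ} (hx : 0 < x) (hI : Inv xs s) :
    Inv (xs ++ [x]) (step s x) := by
  have hx' : ¬ x ≤ 0 := not_le.2 hx
  have hpos' : ∀ a ∈ xs ++ [x], 0 < a := by
    intro a ha
    rcases List.mem_append.1 ha with h | h
    · exact hI.hpos a h
    · simp at h; subst h; exact hx
  have hsum' : ((xs ++ [x]).map (fun a => a^2)).sum = (xs.map (fun a => a^2)).sum + x^2 := by
    simp
  have hx2 : 0 < x^2 := by positivity
  rw [step, if_neg hx']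
  by_cases he : s.homes.isEmpty
  · -- first square ever
    have hhe : s.homes = [] := List.isEmpty_iff.1 he
    have hxs : xs = [] := by
      have := hI.hhomes
      rw [hhe] at this
      exact List.forall₂_nil_right_iff.1 this
    subst hxs
    simp only [if_pos he]
    refine ⟨hpos', ?_, ?_, ?_, by simp, by simp, ?_, ?_⟩
    · simp only [List.nil_append]
      exact List.forall₂_cons.2 ⟨⟨rfl, rfl⟩, List.forall₂_nil_left_iff.2 rfl⟩
    · simp [bricks]
    · intro b hb
      simp only [bricks, List.nil_append, List.map_cons, List.map_nil,
        List.mem_cons, List.not_mem_nil, or_false] at hb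
      subst hb
      exact fun y hy => hy
    · intro _; simp
    · intro _
      rw [hsum']
      simp only [List.map_nil, List.sum_nil, zero_add]
      have := barea_req_le hx
      nlinarith [rt2_pos]
  · -- later squares
    have hhe : s.homes ≠ [] := fun h => he (by simp [h])
    have hxs : xs ≠ [] := by
      intro h
      have := hI.hhomes
      rw [h] at this
      exact hhe (List.forall₂_nil_left_iff.1 this)
    have hareaO := hI.harea hxs
    have hboundO := hI.hbound hxs
    have hhomesO := homes_area_le hI.hhomes hI.hpos
    simp only [if_neg he]
    rcases hp : pickMin (req x) s.free with _ | ⟨b, rest⟩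
    · -- growth branch
      simp only
      set k := req x with hk
      set K := max s.c k with hK
      have hcK : s.c ≤ K := le_max_left _ _
      have hkK : k ≤ K := le_max_right _ _
      have hKor : K = s.c ∨ K = k := max_choice _ _
      set nI := (K - s.c).toNat with hnI
      set inter : List Brick :=
        (List.range nI).map (fun i : ℕ => child2 (C (s.c + i + 1))) with hinter
      set bK : Brick := child2 (C (K + 1)) with hbK
      have hbKk : bK.k = K := by rw [hbK, child2_k]; simp [C]
      set nT := (K - k).toNat with hnT
      set t := chain nT bK with ht
      have ht1 : t.1 = ⟨k, bK.x, bK.y⟩ := by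
        rw [ht, chain_fst, hbKk]
        congr 1
        omega
      have ht1k : t.1.k = k := by rw [ht1]
      have hfree : ∀ u ∈ s.free, u.k < k := pickMin_none hp
      -- facts about inter members
      have hIm : ∀ v ∈ inter, ∃ i : ℕ, (i:ℤ) < K - s.c ∧ v = child2 (C (s.c + i + 1)) := by
        intro v hv
        rw [hinter] at hv
        rcases List.mem_map.1 hv with ⟨i, hi, rfl⟩
        exact ⟨i, by have := List.mem_range.1 hi; omega, rfl⟩
      have hIcls : ∀ v ∈ inter, s.c ≤ v.k ∧ v.k < K ∧ v.k < k := by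
        intro v hv
        obtain ⟨i, hi, rfl⟩ := hIm v hv
        rw [child2_k]
        have hvk : (C (s.c + i + 1)).k - 1 = s.c + i := by simp [C]
        rw [hvk]
        have : s.c + i < K := by omega
        refine ⟨by omega, this, ?_⟩
        rcases hKor with h | h <;> omega
      have hIsub : ∀ v ∈ inter, bset v ⊆ bset (C K) := by
        intro v hv
        obtain ⟨i, hi, rfl⟩ := hIm v hv
        exact (child2_subset _).trans (C_mono (by omega))
      have hIpd : ∀ v ∈ inter, ∀ u : Brick, bset u ⊆ bset (C (v.k)) → PD u v := by
        intro v hv u hu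
        obtain ⟨i, hi, rfl⟩ := hIm v hv
        have h1 : PD (C (s.c + i)) (child2 (C (s.c + i + 1))) := child_pd' _
        have hck : (child2 (C (s.c + i + 1))).k = s.c + i := by rw [child2_k]; simp [C]
        rw [hck] at hu
        exact h1.mono_left hu
      -- facts about t members
      have hT2cls : ∀ v ∈ t.2, k ≤ v.k ∧ v.k < K := by
        intro v hv
        have := chain_class_mem nT bK v hv
        rw [hbKk] at this
        refine ⟨?_, this.2⟩
        have := this.1; omega
      have hT2sub : ∀ v ∈ t.2, bset v ⊆ bset bK := chain_mem_sub nT bK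
      have hT1sub : bset t.1 ⊆ bset bK := chain_fst_sub nT bK
      have hbKsub : bset bK ⊆ bset (C (K+1)) := child2_subset _
      have hKpd : ∀ u : Brick, bset u ⊆ bset (C K) → ∀ w : Brick, bset w ⊆ bset bK → PD u w := by
        intro u hu w hw
        exact ((child_pd' K).mono_left hu).mono_right hw
      have hOsub : ∀ u ∈ bricks s, bset u ⊆ bset (C s.c) := hI.hsub
      have hCsK : bset (C s.c) ⊆ bset (C K) := C_mono hcK
      -- now the fields
      refine ⟨hpos', ?_, ?_, ?_, ?_, ?_, ?_, ?_⟩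
      ·
        refine Forall₂_append hI.hhomes ?_
        exact List.forall₂_cons.2 ⟨⟨rfl, ht1k⟩, List.forall₂_nil_left_iff.2 rfl⟩
      ·
        simp only [bricks, List.map_append, List.map_cons, List.map_nil]
        show ((s.free ++ inter ++ t.2) ++ ((s.homes.map Prod.fst) ++ [t.1])).Pairwise PD
        have hOpd := hI.hpd
        rw [bricks, List.pairwise_append] at hOpd
        obtain ⟨hfO, hhO, hfhO⟩ := hOpd
        -- inter pairwise
        have hIpw : inter.Pairwise PD := by
          rw [hinter, List.pairwise_map]
          have hR : (List.range nI).Pairwise (· < ·) := List.pairwise_lt_range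
          refine hR.imp_of_mem ?_
          intro i j hi hj hij
          have h1 : PD (C (s.c + j)) (child2 (C (s.c + j + 1))) := child_pd' _
          refine h1.mono_left ?_
          exact (child2_subset _).trans (C_mono (by omega))
        have hT2pw : t.2.Pairwise PD := (chain_pairwise nT bK).of_cons
        have hT1T2 : ∀ v ∈ t.2, PD t.1 v := fun v hv => List.rel_of_pairwise_cons (chain_pairwise nT bK) hv
        -- old bricks are inside C s.c
        have hfsub : ∀ u ∈ s.free, bset u ⊆ bset (C s.c) := by
          intro u hu; exact hOsub u (by rw [bricks]; exact List.mem_append_left _ hu)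
        have hhsub : ∀ u ∈ s.homes.map Prod.fst, bset u ⊆ bset (C s.c) := by
          intro u hu; exact hOsub u (by rw [bricks]; exact List.mem_append_right _ hu)
        rw [List.pairwise_append]
        refine ⟨?_, ?_, ?_⟩
        · rw [List.pairwise_append]
          refine ⟨?_, hT2pw, ?_⟩
          · rw [List.pairwise_append]
            refine ⟨hfO, hIpw, ?_⟩
            · intro u hu v hv
              exact hIpd v hv u ((hfsub u hu).trans (C_mono (hIcls v hv).1))
          · intro u hu v hv
            rcases List.mem_append.1 hu with hu | hu
            · exact hKpd u ((hfsub u hu).trans hCsK) v (hT2sub v hv)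
            · exact hKpd u ((hIsub u hu).trans (by exact fun a ha => ha)) v (hT2sub v hv)
        · rw [List.pairwise_append]
          refine ⟨hhO, List.pairwise_singleton _ _, ?_⟩
          intro u hu v hv
          simp only [List.mem_singleton] at hv
          subst hv
          exact hKpd u ((hhsub u hu).trans hCsK) t.1 hT1sub
        · intro u hu v hv
          rcases List.mem_append.1 hv with hv | hv
          · -- v is an old home brick
            rcases List.mem_append.1 hu with hu | hu
            · rcases List.mem_append.1 hu with hu | hu
              · exact hfhO u hu v hv
              · exact (hIpd u hu v ((hhsub v hv).trans (C_mono (hIcls u hu).1))).symm'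
            · exact (hKpd v ((hhsub v hv).trans hCsK) u (hT2sub u hu)).symm'
          · simp only [List.mem_singleton] at hv
            subst hv
            rcases List.mem_append.1 hu with hu | hu
            · rcases List.mem_append.1 hu with hu | hu
              · exact hKpd u ((hfsub u hu).trans hCsK) t.1 hT1sub
              · exact hKpd u (hIsub u hu) t.1 hT1sub
            · exact (hT1T2 u hu).symm'
      ·
        intro u hu
        show bset u ⊆ bset (C (K+1))
        simp only [bricks, List.map_append, List.map_cons, List.map_nil] at hu
        have hCK1 : bset (C K) ⊆ bset (C (K+1)) := C_mono (by omega)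
        rcases List.mem_append.1 hu with hu | hu
        · rcases List.mem_append.1 hu with hu | hu
          · rcases List.mem_append.1 hu with hu | hu
            · exact (hI.hsub u (by rw [bricks]; exact List.mem_append_left _ hu)).trans
                (hCsK.trans hCK1)
            · exact ((hIsub u hu).trans hCK1)
          · exact ((hT2sub u hu).trans (hbKsub))
        · rcases List.mem_append.1 hu with hu | hu
          · exact (hI.hsub u (by rw [bricks]; exact List.mem_append_right _ hu)).trans
              (hCsK.trans hCK1)
          · simp only [List.mem_singleton] at hu
            subst hu
            exact hT1sub.trans hbKsub
      ·
        intro u hu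
        show u.k < K + 1
        rcases List.mem_append.1 hu with hu | hu
        · rcases List.mem_append.1 hu with hu | hu
          · exact lt_of_lt_of_le (hI.hfc u hu) (by omega)
          · have := (hIcls u hu).2.1; omega
        · have := (hT2cls u hu).2; omega
      ·
        have hfnd := hI.hnd
        have hInd : (inter.map Brick.k).Nodup := by
          rw [hinter, List.map_map]
          have : ((fun b => Brick.k b) ∘ fun i : ℕ => child2 (C (s.c + i + 1)))
              = fun i : ℕ => s.c + i := by
            funext i; simp [Function.comp, child2_k, C]
          rw [this]
          exact List.Nodup.map (fun a b h => by omega) List.nodup_range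
        have hTnd : (t.2.map Brick.k).Nodup := chain_nodup nT bK
        simp only [List.map_append]
        rw [List.nodup_append]
        refine ⟨?_, hTnd, ?_⟩
        · rw [List.nodup_append]
          refine ⟨hfnd, hInd, ?_⟩
          rintro a ha _ hb rfl
          rcases List.mem_map.1 ha with ⟨u, hu, rfl⟩
          rcases List.mem_map.1 hb with ⟨v, hv, hvk⟩
          have h1 := hI.hfc u hu
          have h2 := (hIcls v hv).1
          omega
        · rintro a ha _ hb rfl
          rcases List.mem_map.1 hb with ⟨v, hv, hvk⟩
          have h2 := (hT2cls v hv).1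
          rcases List.mem_append.1 ha with ha | ha
          · rcases List.mem_map.1 ha with ⟨u, hu, rfl⟩
            have := hfree u hu; omega
          · rcases List.mem_map.1 ha with ⟨u, hu, rfl⟩
            have := (hIcls u hu).2.2; omega
      ·
        intro _
        show barea (K+1) = _
        have hT : barea k + (t.2.map (fun cb => barea cb.k)).sum = barea K := by
          have := chain_area nT bK
          rw [hbKk] at this
          rw [show K - (nT:ℤ) = k by omega] at this
          exact this
        have hTele : barea K = barea s.c + (inter.map (fun b => barea b.k)).sum := by
          have h1 := barea_tele nI s.c
          rw [show s.c + (nI:ℤ) = K by omega] at h1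
          have hmap : inter.map (fun b => barea b.k)
              = (List.range nI).map (fun i : ℕ => barea (s.c + (i:ℤ))) := by
            rw [hinter, List.map_map]
            have hfun : ((fun b => barea b.k) ∘ fun i : ℕ => child2 (C (s.c + i + 1)))
                = fun i : ℕ => barea (s.c + (i:ℤ)) := by
              funext i; simp [Function.comp, child2_k, C]
            rw [hfun]
          rw [hmap, h1]
        have hsucc : barea (K + 1) = barea K + barea K := barea_succ K
        simp only [List.map_append, List.sum_append, List.map_cons, List.map_nil,
          List.sum_cons, List.sum_nil]
        simp only [ht1k]
        linarith [hareaO]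
      ·
        intro _
        show barea (K+1) ≤ _
        have hT : barea k + (t.2.map (fun cb => barea cb.k)).sum = barea K := by
          have := chain_area nT bK
          rw [hbKk] at this
          rw [show K - (nT:ℤ) = k by omega] at this
          exact this
        have hTele : barea K = barea s.c + (inter.map (fun b => barea b.k)).sum := by
          have h1 := barea_tele nI s.c
          rw [show s.c + (nI:ℤ) = K by omega] at h1
          have hmap : inter.map (fun b => barea b.k)
              = (List.range nI).map (fun i : ℕ => barea (s.c + (i:ℤ))) := by
            rw [hinter, List.map_map]
            have hfun : ((fun b => barea b.k) ∘ fun i : ℕ => child2 (C (s.c + i + 1)))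
                = fun i : ℕ => barea (s.c + (i:ℤ)) := by
              funext i; simp [Function.comp, child2_k, C]
            rw [hfun]
          rw [hmap, h1]
        -- free ++ inter classes are distinct and all < k
        have hcomb : (((s.free ++ inter).map Brick.k).map barea).sum ≤ barea k := by
          apply sum_barea_le
          · simp only [List.map_append]
            rw [List.nodup_append]
            refine ⟨hI.hnd, ?_, ?_⟩
            · rw [hinter, List.map_map]
              have : ((fun b => Brick.k b) ∘ fun i : ℕ => child2 (C (s.c + i + 1)))
                  = fun i : ℕ => s.c + i := by
                funext i; simp [Function.comp, child2_k, C]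
              rw [this]
              exact List.Nodup.map (fun a b h => by omega) List.nodup_range
            · rintro a ha _ hb rfl
              rcases List.mem_map.1 ha with ⟨u, hu, rfl⟩
              rcases List.mem_map.1 hb with ⟨v, hv, hvk⟩
              have h1 := hI.hfc u hu
              have h2 := (hIcls v hv).1
              omega
          · intro j hj
            rcases List.mem_map.1 hj with ⟨u, hu, rfl⟩
            rcases List.mem_append.1 hu with hu | hu
            · exact hfree u hu
            · exact (hIcls u hu).2.2
        have hcomb2 : (s.free.map (fun b => barea b.k)).sum
            + (inter.map (fun b => barea b.k)).sum ≤ barea k := by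
          have : (((s.free ++ inter).map Brick.k).map barea).sum
              = (s.free.map (fun b => barea b.k)).sum + (inter.map (fun b => barea b.k)).sum := by
            rw [List.map_map, List.map_append, List.sum_append]
            rfl
          linarith [hcomb, this.symm.le]
        have hk2 : barea k ≤ 2 * rt2 * x^2 := barea_req_le hx
        have hsucc : barea (K + 1) = barea K + barea K := barea_succ K
        rw [hsum']
        have : barea K ≤ 2 * rt2 * x^2 + 2 * rt2 * (xs.map (fun a => a^2)).sum := by
          rw [hTele]
          calc barea s.c + (inter.map (fun b => barea b.k)).sum
              = (s.free.map (fun b => barea b.k)).sum + (s.homes.map (fun h => barea h.1.k)).sum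
                + (inter.map (fun b => barea b.k)).sum := by rw [hareaO]
            _ ≤ barea k + (s.homes.map (fun h => barea h.1.k)).sum := by linarith [hcomb2]
            _ ≤ 2 * rt2 * x^2 + 2 * rt2 * (xs.map (fun a => a^2)).sum := by
                linarith [hhomesO, hk2]
        linarith
    · -- place into an existing free brick
      simp only
      set k := req x with hk
      obtain ⟨hperm, hkb, hmin⟩ := pickMin_some hp
      have hbmem : b ∈ s.free := hperm.mem_iff.2 List.mem_cons_self
      set nT := (b.k - k).toNat with hnT
      set t := chain nT b with ht
      have ht1 : t.1 = ⟨k, b.x, b.y⟩ := by rw [ht, chain_fst]; congr 1; omega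
      have ht1k : t.1.k = k := by rw [ht1]
      have hT2cls : ∀ v ∈ t.2, k ≤ v.k ∧ v.k < b.k := by
        intro v hv
        have := chain_class_mem nT b v hv
        exact ⟨by omega, this.2⟩
      have hT2sub := chain_mem_sub nT b
      have hT1sub := chain_fst_sub nT b
      have hT1T2 : ∀ v ∈ t.2, PD t.1 v :=
        fun v hv => List.rel_of_pairwise_cons (chain_pairwise nT b) hv
      have hT2pw : t.2.Pairwise PD := (chain_pairwise nT b).of_cons
      have hpermB : (bricks s).Perm (b :: (rest ++ s.homes.map Prod.fst)) :=
        hperm.append_right _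
      have hOpd : (b :: (rest ++ s.homes.map Prod.fst)).Pairwise PD :=
        (List.Perm.pairwise_iff (fun {a b} h => PD_symm h) hpermB).1 hI.hpd
      have hbAll : ∀ u ∈ rest ++ s.homes.map Prod.fst, PD b u :=
        fun u hu => List.rel_of_pairwise_cons hOpd hu
      have hRHpw : (rest ++ s.homes.map Prod.fst).Pairwise PD := hOpd.of_cons
      have hrest_pw := (List.pairwise_append.1 hRHpw).1
      have hhome_pw := (List.pairwise_append.1 hRHpw).2.1
      have hcross := (List.pairwise_append.1 hRHpw).2.2
      have hbsub : bset b ⊆ bset (C s.c) :=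
        hI.hsub b (by rw [bricks]; exact List.mem_append_left _ hbmem)
      have hrestmem : ∀ u ∈ rest, u ∈ s.free :=
        fun u hu => hperm.mem_iff.2 (List.mem_cons_of_mem _ hu)
      refine ⟨hpos', ?_, ?_, ?_, ?_, ?_, ?_, ?_⟩
      · exact Forall₂_append hI.hhomes
          (List.forall₂_cons.2 ⟨⟨rfl, ht1k⟩, List.forall₂_nil_left_iff.2 rfl⟩)
      · -- pairwise disjointness
        simp only [bricks, List.map_append, List.map_cons, List.map_nil]
        rw [List.pairwise_append]
        refine ⟨?_, ?_, ?_⟩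
        · rw [List.pairwise_append]
          refine ⟨hrest_pw, hT2pw, ?_⟩
          intro u hu v hv
          exact ((hbAll u (List.mem_append_left _ hu)).symm').mono_right (hT2sub v hv)
        · rw [List.pairwise_append]
          refine ⟨hhome_pw, List.pairwise_singleton _ _, ?_⟩
          intro u hu v hv
          simp only [List.mem_singleton] at hv
          subst hv
          exact ((hbAll u (List.mem_append_right _ hu)).symm').mono_right hT1sub
        · intro u hu v hv
          rcases List.mem_append.1 hu with hu | hu
          · rcases List.mem_append.1 hv with hv | hv
            · exact hcross u hu v hv
            · simp only [List.mem_singleton] at hv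
              subst hv
              exact ((hbAll u (List.mem_append_left _ hu)).symm').mono_right hT1sub
          · rcases List.mem_append.1 hv with hv | hv
            · exact (hbAll v (List.mem_append_right _ hv)).mono_left (hT2sub u hu)
            · simp only [List.mem_singleton] at hv
              subst hv
              exact (hT1T2 u hu).symm'
      · -- containment
        intro u hu
        show bset u ⊆ bset (C s.c)
        simp only [bricks, List.map_append, List.map_cons, List.map_nil] at hu
        rcases List.mem_append.1 hu with hu | hu
        · rcases List.mem_append.1 hu with hu | hu
          · exact hI.hsub u (by rw [bricks]; exact List.mem_append_left _ (hrestmem u hu))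
          · exact (hT2sub u hu).trans hbsub
        · rcases List.mem_append.1 hu with hu | hu
          · exact hI.hsub u (by rw [bricks]; exact List.mem_append_right _ hu)
          · simp only [List.mem_singleton] at hu
            subst hu
            exact hT1sub.trans hbsub
      · -- free classes below container class
        intro u hu
        show u.k < s.c
        rcases List.mem_append.1 hu with hu | hu
        · exact hI.hfc u (hrestmem u hu)
        · have h1 := (hT2cls u hu).2
          have h2 := hI.hfc b hbmem
          omega
      · -- distinct free classes
        have hfknd : (b.k :: rest.map Brick.k).Nodup :=
          ((hperm.map Brick.k).nodup_iff).1 hI.hnd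
        have hbnotin : b.k ∉ rest.map Brick.k := (List.nodup_cons.1 hfknd).1
        have hrestnd : (rest.map Brick.k).Nodup := (List.nodup_cons.1 hfknd).2
        have hTnd := chain_nodup nT b
        show ((rest ++ t.2).map Brick.k).Nodup
        rw [List.map_append, List.nodup_append]
        refine ⟨hrestnd, hTnd, ?_⟩
        rintro a ha _ hb2 rfl
        rcases List.mem_map.1 ha with ⟨u, hu, rfl⟩
        rcases List.mem_map.1 hb2 with ⟨v, hv, hvk⟩
        have h2 := hT2cls v hv
        by_cases hcase : k ≤ u.k
        · have h3 := hmin u (hrestmem u hu) hcase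
          have hne : u.k ≠ b.k := fun hEq => hbnotin (hEq ▸ List.mem_map_of_mem (f := Brick.k) hu)
          omega
        · omega
      · -- area identity
        intro _
        show barea s.c = _
        have hsumfree : (s.free.map (fun u => barea u.k)).sum
            = barea b.k + (rest.map (fun u => barea u.k)).sum := by
          have := (hperm.map (fun u => barea u.k)).sum_eq
          simpa using this
        have hT : barea k + (t.2.map (fun cb => barea cb.k)).sum = barea b.k := by
          have := chain_area nT b
          rw [show b.k - (nT:ℤ) = k by omega] at this
          exact this
        simp only [List.map_append, List.sum_append, List.map_cons, List.map_nil,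
          List.sum_cons, List.sum_nil, ht1k]
        linarith [hareaO, hsumfree, hT]
      · -- area bound
        intro _
        show barea s.c ≤ _
        rw [hsum']
        have h48 : 0 ≤ 4 * rt2 * x^2 :=
          mul_nonneg (mul_nonneg (by norm_num) rt2_pos.le) (sq_nonneg x)
        linarith [hboundO]

/-! ### Running the algorithm -/

lemma run_inv : ∀ (l : List ℝ), (∀ a ∈ l, 0 < a) → Inv l (run l) := by
  intro l
  induction l using List.reverseRecOn with
  | nil => intro _; exact inv_init
  | append_singleton l a ih =>
      intro hpos
      have hla : 0 < a := hpos a (by simp)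
      have hlp : ∀ b ∈ l, 0 < b := fun b hb => hpos b (by simp [hb])
      rw [run_append]
      exact step_inv hla (ih hlp)

lemma run_homes_len {l : List ℝ} (hl : ∀ a ∈ l, 0 < a) : (run l).homes.length = l.length :=
  ((run_inv l hl).hhomes.length_eq).symm

lemma run_take_homes : ∀ (l : List ℝ), (∀ a ∈ l, 0 < a) → ∀ j, j ≤ l.length →
    (run (l.take j)).homes = (run l).homes.take j := by
  intro l
  induction l using List.reverseRecOn with
  | nil => intro _ j hj; simp at hj; subst hj; simp [run, init]
  | append_singleton l a ih =>
      intro hpos j hj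
      have hla : 0 < a := hpos a (by simp)
      have hlp : ∀ b ∈ l, 0 < b := fun b hb => hpos b (by simp [hb])
      obtain ⟨f, -, hfh, -, -⟩ := step_homes (s := run l) hla
      have hra : run (l ++ [a]) = step (run l) a := run_append l a
      by_cases hcase : j ≤ l.length
      · rw [List.take_append_of_le_length hcase, ih hlp j hcase, hra, hfh,
          List.take_append_of_le_length (by rw [run_homes_len hlp]; exact hcase)]
      · have hj' : j = l.length + 1 := by
          simp only [List.length_append, List.length_singleton] at hj; omega
        subst hj'
        rw [List.take_of_length_le (by simp), List.take_of_length_le ?_]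
        rw [hra, hfh]
        simp [run_homes_len hlp]

lemma strat_place {l : List ℝ} (hl : ∀ a ∈ l, 0 < a) {i : ℕ} (hi : i < l.length)
    (h : i < (run l).homes.length) :
    strat (l.take (i+1)) =
      (((run l).homes.get ⟨i, h⟩).1.x, ((run l).homes.get ⟨i, h⟩).1.y) := by
  have hipos : 0 < l.get ⟨i, hi⟩ := hl _ (l.get_mem _)
  have hsplit : l.take (i+1) = l.take i ++ [l.get ⟨i, hi⟩] := by
    simpa using (List.take_concat_get l i hi).symm
  have hlp : ∀ b ∈ l.take i, 0 < b := fun b hb => hl b (List.mem_of_mem_take hb)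
  obtain ⟨f, -, hfh, hfl, -⟩ := step_homes (s := run (l.take i)) hipos
  have hr2 : run (l.take (i+1)) = step (run (l.take i)) (l.get ⟨i, hi⟩) := by
    rw [hsplit, run_append]
  have hlen : (run (l.take i)).homes.length = i := by
    rw [run_homes_len hlp, List.length_take]
    omega
  have h1 : (run (l.take (i+1))).homes = (run (l.take i)).homes ++ [(f, l.get ⟨i, hi⟩)] := by
    rw [hr2, hfh]
  have h2 : (run (l.take (i+1))).homes = (run l).homes.take (i+1) :=
    run_take_homes l hl (i+1) (by omega)
  -- get entry i from both descriptions
  have hkey : (run l).homes.take (i+1) = (run (l.take i)).homes ++ [(f, l.get ⟨i, hi⟩)] := by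
    rw [← h2, h1]
  have hlen3 : i < ((run l).homes.take (i+1)).length := by
    rw [List.length_take]; omega
  have hgetA : ((run l).homes.take (i+1))[i]'hlen3 = (f, l.get ⟨i, hi⟩) := by
    simp only [hkey]
    exact List.getElem_concat_length hlen.symm _
  have hgetB : ((run l).homes.take (i+1))[i]'hlen3 = (run l).homes[i]'h :=
    List.getElem_take
  have hfin : (run l).homes.get ⟨i, h⟩ = (f, l.get ⟨i, hi⟩) := by
    rw [List.get_eq_getElem, ← hgetB, hgetA]
  rw [strat, hr2, hfl, hfin]

lemma homes_side {l : List ℝ} (hl : ∀ a ∈ l, 0 < a) {i : ℕ} (hi : i < l.length)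
    (h : i < (run l).homes.length) :
    ((run l).homes.get ⟨i, h⟩).2 = l.get ⟨i, hi⟩ ∧
    ((run l).homes.get ⟨i, h⟩).1.k = req (l.get ⟨i, hi⟩) := by
  have hf := (run_inv l hl).hhomes
  rcases List.forall₂_iff_get.1 hf with ⟨-, hget⟩
  exact hget i hi h

lemma homes_mem_bricks {l : List ℝ} {i : ℕ} (h : i < (run l).homes.length) :
    ((run l).homes.get ⟨i, h⟩).1 ∈ bricks (run l) := by
  rw [bricks]
  refine List.mem_append_right _ ?_
  exact List.mem_map_of_mem (List.get_mem _ _)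

lemma homes_pd {l : List ℝ} (hl : ∀ a ∈ l, 0 < a) {i j : ℕ}
    (hi : i < (run l).homes.length) (hj : j < (run l).homes.length) (hij : i ≠ j) :
    PD ((run l).homes.get ⟨i, hi⟩).1 ((run l).homes.get ⟨j, hj⟩).1 := by
  have hpd := (run_inv l hl).hpd
  rw [bricks, List.pairwise_append] at hpd
  have hmap := hpd.2.1
  rw [List.pairwise_iff_get] at hmap
  have hlen : ∀ t, t < (run l).homes.length → t < ((run l).homes.map Prod.fst).length := by
    intro t ht; simpa using ht
  have hgm : ∀ (t : ℕ) (ht : t < (run l).homes.length),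
      ((run l).homes.map Prod.fst).get ⟨t, hlen t ht⟩ = ((run l).homes.get ⟨t, ht⟩).1 := by
    intro t ht; simp
  rcases lt_or_gt_of_ne hij with hlt | hlt
  · have := hmap ⟨i, hlen i hi⟩ ⟨j, hlen j hj⟩ hlt
    rwa [hgm i hi, hgm j hj] at this
  · have := hmap ⟨j, hlen j hj⟩ ⟨i, hlen i hi⟩ hlt
    rw [hgm i hi, hgm j hj] at this
    exact this.symm'

/-! ### Lower bounds on `Opt` -/

lemma placedSq_eq (p : ℝ × ℝ) (x : ℝ) : placedSq p x = placedSquare p x := rfl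

open MeasureTheory in
lemma area_le_of_packing {m : ℕ} (y : Fin m → ℝ) (hy : ∀ i, 0 < y i) {s : ℝ}
    (p : Fin m → ℝ × ℝ)
    (hsub : ∀ i, placedSquare (p i) (y i) ⊆ Icc (0:ℝ) s ×ˢ Icc (0:ℝ) s)
    (hdisj : ∀ i j, i ≠ j → Disjoint (interior (placedSquare (p i) (y i)))
      (interior (placedSquare (p j) (y j)))) (hs : 0 ≤ s) :
    ∑ i, (y i)^2 ≤ s^2 := by
  classical
  set f : Fin m → Set (ℝ × ℝ) := fun i => interior (placedSquare (p i) (y i)) with hf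
  have hmeas : ∀ i, MeasurableSet (f i) := fun i => isOpen_interior.measurableSet
  have hpair : Pairwise (Function.onFun Disjoint f) := fun i j hij => hdisj i j hij
  have hU : volume (⋃ i, f i) = ∑' i, volume (f i) :=
    measure_iUnion hpair hmeas
  have hvol : ∀ i, volume (f i) = ENNReal.ofReal ((y i)^2) := by
    intro i
    rw [hf]
    simp only
    rw [placedSquare, interior_prod_eq, interior_Icc, interior_Icc,
      Measure.volume_eq_prod, Measure.prod_prod, Real.volume_Ioo, Real.volume_Ioo]
    rw [add_sub_cancel_left, add_sub_cancel_left,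
      ← ENNReal.ofReal_mul (by linarith [hy i])]
    congr 1
    ring
  have hsubU : (⋃ i, f i) ⊆ Icc (0:ℝ) s ×ˢ Icc (0:ℝ) s :=
    Set.iUnion_subset fun i => interior_subset.trans (hsub i)
  have hbox : volume (Icc (0:ℝ) s ×ˢ Icc (0:ℝ) s) = ENNReal.ofReal (s^2) := by
    rw [Measure.volume_eq_prod, Measure.prod_prod, Real.volume_Icc, sub_zero,
      ← ENNReal.ofReal_mul hs]
    congr 1
    ring
  have hle : volume (⋃ i, f i) ≤ volume (Icc (0:ℝ) s ×ˢ Icc (0:ℝ) s) :=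
    measure_mono hsubU
  rw [hU, hbox, tsum_fintype] at hle
  have heq : ∑ i, volume (f i) = ENNReal.ofReal (∑ i, (y i)^2) := by
    rw [ENNReal.ofReal_sum_of_nonneg (fun i _ => sq_nonneg (y i))]
    exact Finset.sum_congr rfl (fun i _ => hvol i)
  rw [heq] at hle
  exact (ENNReal.ofReal_le_ofReal_iff (by positivity)).1 hle

lemma opt_set_nonempty {m : ℕ} (y : Fin m → ℝ) (hy : ∀ i, 0 < y i) :
    {s : ℝ | 0 < s ∧ ∃ p : Fin m → ℝ × ℝ,
    (∀ i, placedSquare (p i) (y i) ⊆ Icc (0 : ℝ) s ×ˢ Icc (0 : ℝ) s) ∧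
    ∀ i j, i ≠ j →
      Disjoint (interior (placedSquare (p i) (y i)))
        (interior (placedSquare (p j) (y j)))}.Nonempty := by
  classical
  set a : Fin m → ℝ := fun i => ∑ j ∈ Finset.Iio i, y j with ha
  set s₀ : ℝ := 1 + ∑ j, y j with hs₀
  have hsumnn : (0:ℝ) ≤ ∑ j, y j := Finset.sum_nonneg (fun j _ => (hy j).le)
  have hs₀pos : 0 < s₀ := by rw [hs₀]; linarith
  have hann : ∀ i, 0 ≤ a i := fun i => Finset.sum_nonneg (fun j _ => (hy j).le)
  have hIic : ∀ i : Fin m, a i + y i = ∑ j ∈ Finset.Iic i, y j := by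
    intro i
    rw [ha]
    simp only
    rw [← Finset.Iio_insert, Finset.sum_insert (by simp), add_comm]
  have hstep : ∀ i j : Fin m, i < j → a i + y i ≤ a j := by
    intro i j hij
    rw [hIic i, ha]
    simp only
    apply Finset.sum_le_sum_of_subset_of_nonneg
    · intro t ht
      simp only [Finset.mem_Iic] at ht
      simp only [Finset.mem_Iio]
      exact lt_of_le_of_lt ht hij
    · exact fun t _ _ => (hy t).le
  have htop : ∀ i : Fin m, a i + y i ≤ s₀ := by
    intro i
    rw [hIic i, hs₀]
    have : ∑ j ∈ Finset.Iic i, y j ≤ ∑ j, y j :=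
      Finset.sum_le_sum_of_subset_of_nonneg (Finset.subset_univ _) (fun t _ _ => (hy t).le)
    linarith
  refine ⟨s₀, hs₀pos, fun i => (a i, 0), ?_, ?_⟩
  · intro i
    rw [placedSquare]
    apply Set.prod_mono
    · exact Icc_subset_Icc (hann i) (htop i)
    · refine Icc_subset_Icc le_rfl ?_
      have h1 : y i ≤ ∑ j, y j := Finset.single_le_sum (fun t _ => (hy t).le) (Finset.mem_univ i)
      rw [hs₀]; simp only [zero_add]; linarith
  · intro i j hij
    rcases lt_or_gt_of_ne hij with h | h
    · exact disjoint_boxes_x (hstep i j h)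
    · exact (disjoint_boxes_x (hstep j i h)).symm

lemma opt_nonneg {m : ℕ} (y : Fin m → ℝ) : 0 ≤ Opt y :=
  Real.sInf_nonneg (fun s hs => hs.1.le)

lemma sqrt_le_opt {m : ℕ} (y : Fin m → ℝ) (hy : ∀ i, 0 < y i) :
    Real.sqrt (∑ i, (y i)^2) ≤ Opt y := by
  apply le_csInf (opt_set_nonempty y hy)
  rintro b ⟨hbpos, p, hsub, hdisj⟩
  have h := area_le_of_packing y hy p hsub hdisj hbpos.le
  calc Real.sqrt (∑ i, (y i)^2) ≤ Real.sqrt (b^2) := Real.sqrt_le_sqrt h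
    _ = b := Real.sqrt_sq hbpos.le

lemma get_ofFn_eq {n : ℕ} (x : Fin n → ℝ) (t : Fin n) (h : (t:ℕ) < (List.ofFn x).length) :
    (List.ofFn x).get ⟨t, h⟩ = x t := by
  rw [List.get_ofFn]
  exact congrArg x (Fin.ext rfl)

end DBP

end

open DBP in
/-- Dynamic Brick Packing is `2√2`-competitive: there is a valid online placement
strategy such that, at every stage `m` of every input sequence, the side length of
the smallest axis-parallel square enclosing the first `m` placed squares is at most
`2√2` times the optimal offline container size for the first `m` side lengths. -/
theorem dynamic_brick_competitive :
    ∃ σ : List ℝ → ℝ × ℝ, ValidStrategy σ ∧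
      ∀ (n : ℕ) (x : Fin n → ℝ), (∀ i, 0 < x i) →
        ∀ (m : ℕ) (hm : 1 ≤ m) (hmn : m ≤ n),
          minSide (⋃ i : Fin n, ⋃ (_ : (i : ℕ) < m), place σ x i) ≤
            2 * Real.sqrt 2 * Opt (fun i : Fin m => x (Fin.castLE hmn i)) := by
    classical
  refine ⟨DBP.strat, ?_, ?_⟩
  · -- validity
    intro n x hx i j hij
    set L := List.ofFn x with hL
    have hLpos : ∀ a ∈ L, 0 < a := by
      intro a ha
      rw [hL, List.mem_ofFn] at ha
      obtain ⟨t, rfl⟩ := ha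
      exact hx t
    have hLlen : L.length = n := List.length_ofFn
    have hil : (i:ℕ) < L.length := by rw [hLlen]; exact i.isLt
    have hjl : (j:ℕ) < L.length := by rw [hLlen]; exact j.isLt
    have hih : (i:ℕ) < (run L).homes.length := by rw [run_homes_len hLpos]; exact hil
    have hjh : (j:ℕ) < (run L).homes.length := by rw [run_homes_len hLpos]; exact hjl
    have hdesc : ∀ (t : Fin n) (htl : (t:ℕ) < L.length) (hth : (t:ℕ) < (run L).homes.length),
        place DBP.strat x t ⊆ bset (((run L).homes.get ⟨t, hth⟩).1) := by
      intro t htl hth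
      have hcorner := strat_place hLpos htl hth
      have hside := homes_side hLpos htl hth
      have hgetx : L.get ⟨(t:ℕ), htl⟩ = x t := get_ofFn_eq x t htl
      show placedSquare (DBP.strat (L.take ((t:ℕ)+1))) (x t) ⊆ _
      rw [hcorner, ← placedSq_eq]
      apply square_subset_bset
      rw [hside.2, hgetx]
      exact le_d_req (hx t)
    have hpd := homes_pd hLpos hih hjh (fun hc => hij (Fin.ext hc))
    exact hpd.mono (interior_mono (hdesc i hil hih)) (interior_mono (hdesc j hjl hjh))
  · -- competitiveness
    intro n x hx m hm hmn
    set L := List.ofFn x with hL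
    have hLpos : ∀ a ∈ L, 0 < a := by
      intro a ha
      rw [hL, List.mem_ofFn] at ha
      obtain ⟨t, rfl⟩ := ha
      exact hx t
    have hLlen : L.length = n := List.length_ofFn
    set Lm := L.take m with hLm
    have hLmlen : Lm.length = m := by rw [hLm, List.length_take, hLlen]; omega
    have hLmpos : ∀ a ∈ Lm, 0 < a := fun a ha => hLpos a (List.mem_of_mem_take ha)
    have hInv := run_inv Lm hLmpos
    have hxs : Lm ≠ [] := by
      intro hc
      rw [hc] at hLmlen
      simp at hLmlen
      omega
    set E := d ((run Lm).c + 1) with hE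
    have hEpos : 0 < E := d_pos _
    have hsubE : ∀ t : Fin n, (t:ℕ) < m →
        place DBP.strat x t ⊆ Icc (0:ℝ) E ×ˢ Icc (0:ℝ) E := by
      intro t htm
      have htl : (t:ℕ) < Lm.length := by omega
      have hth : (t:ℕ) < (run Lm).homes.length := by rw [run_homes_len hLmpos]; exact htl
      have htake : L.take ((t:ℕ)+1) = Lm.take ((t:ℕ)+1) := by
        rw [hLm, List.take_take, min_eq_left (by omega)]
      have hcorner := strat_place hLmpos htl hth
      have hside := homes_side hLmpos htl hth
      have ht1 : (t:ℕ) < L.length := by rw [hLlen]; exact t.isLt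
      have hgetx : Lm.get ⟨(t:ℕ), htl⟩ = x t := by
        have hA : Lm.get ⟨(t:ℕ), htl⟩ = L.get ⟨(t:ℕ), ht1⟩ := by simp only [List.get_eq_getElem]; exact List.getElem_take
        rw [hA]
        exact get_ofFn_eq x t ht1
      show placedSquare (DBP.strat (L.take ((t:ℕ)+1))) (x t) ⊆ _
      rw [htake, hcorner, ← placedSq_eq]
      refine (square_subset_bset ?_).trans ?_
      · rw [hside.2, hgetx]
        exact le_d_req (hx t)
      · exact (hInv.hsub _ (homes_mem_bricks hth)).trans (C_subset_encl _)
    have hUsub : (⋃ i : Fin n, ⋃ (_ : (i : ℕ) < m), place DBP.strat x i) ⊆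
        Icc (0:ℝ) E ×ˢ Icc (0:ℝ) E := by
      apply Set.iUnion_subset
      intro t
      apply Set.iUnion_subset
      intro htm
      exact hsubE t htm
    have hmn0 : 0 < n := lt_of_lt_of_le hm hmn
    have hne : (DBP.strat (L.take ((0:ℕ)+1))) ∈
        (⋃ i : Fin n, ⋃ (_ : (i : ℕ) < m), place DBP.strat x i) := by
      apply Set.mem_iUnion.2
      refine ⟨⟨0, hmn0⟩, Set.mem_iUnion.2 ⟨hm, ?_⟩⟩
      show _ ∈ placedSquare (DBP.strat (L.take ((0:ℕ)+1))) (x ⟨0, hmn0⟩)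
      rw [placedSquare]
      refine Set.mem_prod.2 ⟨?_, ?_⟩ <;>
        exact ⟨le_rfl, by linarith [hx ⟨0, hmn0⟩]⟩
    have hminle : minSide (⋃ i : Fin n, ⋃ (_ : (i : ℕ) < m), place DBP.strat x i) ≤ E := by
      apply csInf_le
      · refine ⟨0, ?_⟩
        rintro t ⟨aa, bb, hsub2⟩
        have hpt := hsub2 hne
        rw [Set.mem_prod] at hpt
        have h1 := hpt.1
        rw [mem_Icc] at h1
        linarith [h1.1, h1.2]
      · exact ⟨0, 0, by simpa using hUsub⟩
    set y : Fin m → ℝ := fun i => x (Fin.castLE hmn i) with hy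
    have hyp : ∀ i, 0 < y i := fun i => hx _
    have hLmofn : Lm = List.ofFn y := by
      apply List.ext_get
      · rw [hLmlen, List.length_ofFn]
      · intro t h1 h2
        have htm : t < m := by rw [hLmlen] at h1; exact h1
        have htn : t < n := by omega
        have ht1 : t < L.length := by rw [hLlen]; exact htn
        have hA : Lm.get ⟨t, h1⟩ = L.get ⟨t, ht1⟩ := by simp only [List.get_eq_getElem]; exact List.getElem_take
        rw [hA, get_ofFn_eq x ⟨t, htn⟩ ht1, get_ofFn_eq y ⟨t, htm⟩ h2]
        rfl
    have hsum_eq : (Lm.map (fun a => a^2)).sum = ∑ i, (y i)^2 := by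
      rw [hLmofn, List.map_ofFn, List.sum_ofFn]
      rfl
    have hbound := hInv.hbound hxs
    have hEsq : E^2 = rt2 * barea (run Lm).c := by
      rw [hE, sq, d_sq, barea, zpow_add_one₀ (by norm_num : (2:ℝ) ≠ 0), ← rt2_sq]
      ring
    have hO1 : Real.sqrt (∑ i, (y i)^2) ≤ Opt y := sqrt_le_opt y hyp
    have hOnn : 0 ≤ Opt y := opt_nonneg y
    have hsq : (∑ i, (y i)^2) ≤ (Opt y)^2 := by
      have h1 : (∑ i, (y i)^2) = (Real.sqrt (∑ i, (y i)^2))^2 :=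
        (Real.sq_sqrt (by positivity)).symm
      rw [h1]
      exact pow_le_pow_left₀ (Real.sqrt_nonneg _) hO1 2
    have hE2 : E^2 ≤ (2 * rt2 * Opt y)^2 := by
      have hr : rt2^2 = 2 := by rw [sq, rt2_sq]
      have h2 : (2*rt2*(Opt y))^2 = 8 * (Opt y)^2 := by
        calc (2*rt2*(Opt y))^2 = 4 * rt2^2 * (Opt y)^2 := by ring
          _ = 8 * (Opt y)^2 := by rw [hr]; ring
      rw [h2]
      calc E^2 = rt2 * barea (run Lm).c := hEsq
        _ ≤ rt2 * (4 * rt2 * (Lm.map (fun a => a^2)).sum) :=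
            mul_le_mul_of_nonneg_left hbound rt2_pos.le
        _ = 8 * (Lm.map (fun a => a^2)).sum := by
            linear_combination (4 * (Lm.map (fun a => a^2)).sum) * rt2_sq
        _ = 8 * ∑ i, (y i)^2 := by rw [hsum_eq]
        _ ≤ 8 * (Opt y)^2 := by linarith [hsq]
    have hEO : E ≤ 2 * rt2 * Opt y := by
      have hRnn : 0 ≤ 2 * rt2 * Opt y :=
        mul_nonneg (mul_nonneg (by norm_num) rt2_pos.le) hOnn
      nlinarith [hE2, hEpos.le, hRnn]
    calc minSide (⋃ i : Fin n, ⋃ (_ : (i : ℕ) < m), place DBP.strat x i) ≤ E := hminle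
      _ ≤ 2 * rt2 * Opt y := hEO
      _ = 2 * Real.sqrt 2 * Opt (fun i : Fin m => x (Fin.castLE hmn i)) := by rw [hy]; rfl
end
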